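/- Fix M = (m_i) with m_1 > 6, m_i² < m_{i+1}, and an M-good N = (n_i), and let 𝓜 = {µ_𝓣 : 𝓣 ∈ 𝓖} be the associated norming set. For every j ∈ ℕ: if (x_i)_{i=1}^k is an S_{n_j}-admissible finite block basis of (e_n) in X_𝓜, then ‖Σ_{i=1}^k x_i‖_𝓜 ≥ (1/m_j) Σ_{i=1}^k ‖x_i‖_𝓜. Consequently X_𝓜 is an asymptotic (1/m_j)-ℓ1^{n_j} space for every j ∈ ℕ. -/

import Mathlib

open Filter Topology

open scoped Classical

noncomputable section

namespace Gasparis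

/-! ## Schreier families and admissibility -/

/-- `E < F` for finite sets: every element of `E` is smaller than every element of `F`. -/
def FinLt (E F : Finset ℕ) : Prop := ∀ i ∈ E, ∀ j ∈ F, i < j

/-- The Schreier families `S_n`. -/
def Schreier : ℕ → Set (Finset ℕ)
  | 0 => {F | F.card ≤ 1}
  | n + 1 => {F | F = ∅ ∨ ∃ (k : ℕ) (G : ℕ → Finset ℕ), 0 < k ∧
      (∀ i < k, G i ∈ Schreier n ∧ (G i).Nonempty) ∧
      (∀ i j, i < j → j < k → FinLt (G i) (G j)) ∧
      (∀ j ∈ G 0, k ≤ j) ∧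
      F = (Finset.range k).biUnion G}

/-- Minimum of a finite set of naturals (junk value `0` for `∅`). -/
def minF (I : Finset ℕ) : ℕ := sInf (I : Set ℕ)

/-- Minimum of the support of a finitely supported sequence. -/
def minSupp (f : ℕ →₀ ℝ) : ℕ := minF f.support

/-- `I 0 < I 1 < ⋯ < I (k-1)` is an `S_n`-admissible collection. -/
def Admissible (n k : ℕ) (I : ℕ → Finset ℕ) : Prop :=
  (∀ i < k, (I i).Nonempty) ∧
  (∀ i j, i < j → j < k → FinLt (I i) (I j)) ∧
  ((Finset.range k).image fun i => minF (I i)) ∈ Schreier n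

/-- An (unordered) family of finite sets is `S_n`-admissible. -/
def FamAdmissible (n : ℕ) (𝓕 : Finset (Finset ℕ)) : Prop :=
  (∀ I ∈ 𝓕, I.Nonempty) ∧
  (∀ I ∈ 𝓕, ∀ J ∈ 𝓕, I ≠ J → FinLt I J ∨ FinLt J I) ∧
  𝓕.image minF ∈ Schreier n

/-- `F` is a maximal (under inclusion) member of `S_n`. -/
def MaximalSchreier (n : ℕ) (F : Finset ℕ) : Prop :=
  F ∈ Schreier n ∧ ∀ G ∈ Schreier n, F ⊆ G → G = F

/-! ## The Schreier and conditional Schreier norms on `c₀₀ = ℕ →₀ ℝ` -/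

/-- The `n`-th Schreier norm on `c₀₀`. -/
def schreierNorm (n : ℕ) (x : ℕ →₀ ℝ) : ℝ :=
  sSup {r : ℝ | ∃ F ∈ Schreier n, r = ∑ i ∈ F, |x i|}

/-- The `n`-th conditional Schreier norm on `c₀₀`. -/
def cschreierNorm (n : ℕ) (x : ℕ →₀ ℝ) : ℝ :=
  sSup {r : ℝ | ∃ (k : ℕ) (J : ℕ → Finset ℕ),
    (∀ i < k, ∃ a b : ℕ, J i = Finset.Icc a b) ∧ Admissible n k J ∧
    r = ∑ i ∈ Finset.range k, |∑ p ∈ J i, x p|}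

/-! ## Block sequences, described by their coefficients -/

/-- A block basis, given by the (finitely supported) coefficient sequences of its vectors:
successive nonempty supports. -/
def IsBlockSeq (u : ℕ → ℕ →₀ ℝ) : Prop :=
  (∀ k, u k ≠ 0) ∧ ∀ k, ∀ i ∈ (u k).support, ∀ j ∈ (u (k + 1)).support, i < j

/-- `v` is a block basis of the block basis `u`. -/
def IsBlockSeqOf (v u : ℕ → ℕ →₀ ℝ) : Prop :=
  IsBlockSeq v ∧ ∃ d : ℕ → ℕ →₀ ℝ, IsBlockSeq d ∧
    ∀ k, v k = (d k).sum fun i a => a • u i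

/-- The vector of `X` with coefficients `f` with respect to the sequence `e`. -/
def vecIn {X : Type*} [AddCommGroup X] [Module ℝ X] (e : ℕ → X) (f : ℕ →₀ ℝ) : X :=
  f.sum fun i a => a • e i

/-! ## Schauder bases -/

/-- A Schauder basis of a Banach space, bundled with its biorthogonal functionals. -/
structure SchauderBasis (X : Type*) [NormedAddCommGroup X] [NormedSpace ℝ X] where
  e : ℕ → X
  coord : ℕ → X →L[ℝ] ℝ
  biorth : ∀ i j, coord i (e j) = if i = j then (1 : ℝ) else 0
  expand : ∀ x : X, Tendsto (fun k => ∑ i ∈ Finset.range k, coord i x • e i) atTop (𝓝 x)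

variable {X : Type*}

def NormalizedBasis [NormedAddCommGroup X] [NormedSpace ℝ X] (b : SchauderBasis X) : Prop :=
  ∀ i, ‖b.e i‖ = 1

/-- Every projection onto an interval of coordinates has norm at most `1`. -/
def Bimonotone [NormedAddCommGroup X] [NormedSpace ℝ X] (b : SchauderBasis X) : Prop :=
  ∀ (x : X) (a c : ℕ), ‖∑ i ∈ Finset.Icc a c, b.coord i x • b.e i‖ ≤ ‖x‖

/-- The biorthogonal functionals form a basis of the dual: the expansion of every
continuous functional converges to it. -/
def Shrinking [NormedAddCommGroup X] [NormedSpace ℝ X] (b : SchauderBasis X) : Prop :=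
  ∀ f : X →L[ℝ] ℝ,
    Tendsto (fun k => ‖f - ∑ i ∈ Finset.range k, f (b.e i) • b.coord i‖) atTop (𝓝 (0 : ℝ))

def BoundedlyComplete [NormedAddCommGroup X] [NormedSpace ℝ X] (b : SchauderBasis X) : Prop :=
  ∀ a : ℕ → ℝ, (∃ C : ℝ, ∀ k, ‖∑ i ∈ Finset.range k, a i • b.e i‖ ≤ C) →
    ∃ x : X, Tendsto (fun k => ∑ i ∈ Finset.range k, a i • b.e i) atTop (𝓝 x)

/-- `1`-unconditionality: changing signs of coefficients does not increase the norm. -/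
def OneUnconditional [NormedAddCommGroup X] [NormedSpace ℝ X] (b : SchauderBasis X) : Prop :=
  ∀ (a ε : ℕ → ℝ) (F : Finset ℕ), (∀ i, ε i = 1 ∨ ε i = -1) →
    ‖∑ i ∈ F, (ε i * a i) • b.e i‖ ≤ ‖∑ i ∈ F, a i • b.e i‖

/-! ## Spreading models, asymptotic `ℓ¹` and the distortion property -/

/-- `(x_n)` is an `ε`-`ℓ¹ⁿ` spreading model. -/
def SpreadingModelL1 [NormedAddCommGroup X] [NormedSpace ℝ X]
    (x : ℕ → X) (ε : ℝ) (n : ℕ) : Prop :=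
  ∀ F ∈ Schreier n, ∀ a : ℕ → ℝ, ε * ∑ i ∈ F, |a i| ≤ ‖∑ i ∈ F, a i • x i‖

/-- Every normalized block basis of `(e_n)` is an `ε`-`ℓ¹ⁿ` spreading model. -/
def AsymptoticL1 [NormedAddCommGroup X] [NormedSpace ℝ X]
    (b : SchauderBasis X) (ε : ℝ) (n : ℕ) : Prop :=
  ∀ u : ℕ → ℕ →₀ ℝ, IsBlockSeq u → (∀ k, ‖vecIn b.e (u k)‖ = 1) →
    SpreadingModelL1 (fun k => vecIn b.e (u k)) ε n

/-- The modulus `τ(U, δ) ∈ ℕ∞` of the block subspace `U` generated by the block basis `u`. -/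
def tau [NormedAddCommGroup X] [NormedSpace ℝ X]
    (e : ℕ → X) (u : ℕ → ℕ →₀ ℝ) (δ : ℝ) : ℕ∞ :=
  sSup {z : ℕ∞ | ∃ ζ : ℕ, z = (ζ : ℕ∞) ∧
    ∀ v : ℕ → ℕ →₀ ℝ, IsBlockSeqOf v u → (∀ k, ‖vecIn e (v k)‖ = 1) →
      ∃ φ : ℕ → ℕ, StrictMono φ ∧ SpreadingModelL1 (fun k => vecIn e (v (φ k))) δ ζ}

/-- The `(d, N, P, a)` distortion property (with the standing assumptions on `d, N, P, a`). -/
structure DistortionProperty [NormedAddCommGroup X] [NormedSpace ℝ X]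
    (b : SchauderBasis X) (d : ℝ) (N P : ℕ → ℕ) (δ : ℕ → ℝ) : Prop where
  one_lt_d : 1 < d
  N_mono : StrictMono N
  P_mono : StrictMono P
  N_le_P : ∀ i, (if i = 0 then 1 else N (i - 1)) ≤ P i
  P_lt_N : ∀ i, 2 * P i < N i
  δ_pos : ∀ i, 0 < δ i
  δ_anti : ∀ i, δ (i + 1) ≤ δ i
  δ_null : Tendsto δ atTop (𝓝 (0 : ℝ))
  asymptotic : ∀ j, AsymptoticL1 b (δ j) (N j)
  tau_lt : ∀ j, ∀ u : ℕ → ℕ →₀ ℝ, IsBlockSeq u → tau b.e u (d * δ j) < (P j : ℕ∞)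

/-! ## Subspaces, hereditary indecomposability, total incomparability, distortion -/

/-- An (infinite-dimensional, closed) subspace of a Banach space. -/
def IsBanachSubspace [NormedAddCommGroup X] [NormedSpace ℝ X] (Y : Submodule ℝ X) : Prop :=
  IsClosed (Y : Set X) ∧ ¬ FiniteDimensional ℝ Y

/-- Hereditarily indecomposable. -/
def HI (X : Type*) [NormedAddCommGroup X] [NormedSpace ℝ X] : Prop :=
  ∀ Y Z : Submodule ℝ X, IsBanachSubspace Y → IsBanachSubspace Z → Y ⊓ Z = ⊥ →
    ¬ IsClosed ((Y ⊔ Z : Submodule ℝ X) : Set X)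

/-- No subspace of `X` is isomorphic to a subspace of `Y`. -/
def TotallyIncomparable (X Y : Type*) [NormedAddCommGroup X] [NormedSpace ℝ X]
    [NormedAddCommGroup Y] [NormedSpace ℝ Y] : Prop :=
  ∀ (U : Submodule ℝ X) (V : Submodule ℝ Y), IsBanachSubspace U → IsBanachSubspace V →
    IsEmpty (U ≃L[ℝ] V)

/-- An equivalent norm on `X`. -/
structure IsEquivNorm [NormedAddCommGroup X] [NormedSpace ℝ X] (Nn : X → ℝ) : Prop where
  add_le : ∀ x y : X, Nn (x + y) ≤ Nn x + Nn y
  smul_eq : ∀ (a : ℝ) (x : X), Nn (a • x) = |a| * Nn x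
  lower : ∃ c : ℝ, 0 < c ∧ ∀ x : X, c * ‖x‖ ≤ Nn x
  upper : ∃ C : ℝ, 0 < C ∧ ∀ x : X, Nn x ≤ C * ‖x‖

def ArbitrarilyDistortable (X : Type*) [NormedAddCommGroup X] [NormedSpace ℝ X] : Prop :=
  ∀ lam : ℝ, 1 < lam → ∃ Nn : X → ℝ, IsEquivNorm Nn ∧
    ∀ Y : Submodule ℝ X, IsBanachSubspace Y →
      ∃ x ∈ Y, ∃ y ∈ Y, x ≠ 0 ∧ y ≠ 0 ∧ ‖x‖ = ‖y‖ ∧ lam < Nn x / Nn y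

/-- Reflexivity: the canonical embedding into the double dual is surjective. -/
def IsReflexiveSpace (X : Type*) [NormedAddCommGroup X] [NormedSpace ℝ X] : Prop :=
  Function.Surjective (NormedSpace.inclusionInDoubleDual ℝ X)

/-- A bundled (real, infinite-dimensional or not) Banach space. -/
structure BanachSpaceB where
  carrier : Type
  [grp : NormedAddCommGroup carrier]
  [mod : NormedSpace ℝ carrier]
  [comp : CompleteSpace carrier]

attribute [instance] BanachSpaceB.grp BanachSpaceB.mod BanachSpaceB.comp

/-! ## `M`-good sequences -/

/-- The sequence `f_j^N` (0-indexed: `fN m n j` is the paper's `f_{j+1}^N`). -/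
def fN (m n : ℕ → ℕ) : ℕ → ℕ
  | 0 => 1
  | j + 1 => sSup {s : ℕ | ∃ ρ : ℕ → ℕ,
      (∏ i ∈ Finset.range (j + 1), m i ^ ρ i) < m (j + 1) ^ 3 ∧
      s = ∑ i ∈ Finset.range (j + 1), ρ i * n i}

/-- Standing assumptions on the fixed sequences `M = (m_i)` and `L = (l_i)`. -/
structure MLParams (m l : ℕ → ℕ) : Prop where
  m_mono : StrictMono m
  m_six : 6 < m 0
  m_sq : ∀ i, m i ^ 2 < m (i + 1)
  l_mono : StrictMono l
  l_four : 4 < l 0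
  l_exp : ∀ i, m i < 2 ^ l i

/-- `N = (n_i)` (an infinite subset of `ℕ`, given by its increasing enumeration)
is `M`-good: `l_j (f_j^N + 1) < n_j` for all `j`. -/
def MGoodSeq (m l n : ℕ → ℕ) : Prop :=
  StrictMono n ∧ ∀ j, l j * (fN m n j + 1) < n j

/-! ## Appropriate trees -/

/-- A node of a tree: a nonempty list of triples `(m-entry, interval, sign)`. -/
abbrev GNode := List (ℕ × Finset ℕ × ℤ)

def mEnt (α : GNode) : ℕ := (α.getLastD (0, ∅, 1)).1
def iEnt (α : GNode) : Finset ℕ := (α.getLastD (0, ∅, 1)).2.1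
def sEnt (α : GNode) : ℤ := (α.getLastD (0, ∅, 1)).2.2

/-- `α` is a terminal node of the tree `T`. -/
def IsTerminalIn (T : Finset GNode) (α : GNode) : Prop :=
  ∀ β ∈ T, α <+: β → β = α

/-- The immediate successors of `α` in `T`. -/
def childrenIn (T : Finset GNode) (α : GNode) : Finset GNode :=
  T.filter fun β => β.length = α.length + 1 ∧ α <+: β

/-- Appropriate trees (with respect to the data `M = (m_i)`, `N = (n_i)`). -/
def IsAppropriate (m n : ℕ → ℕ) (T : Finset GNode) : Prop :=
  T.Nonempty ∧
  (∀ α ∈ T, α ≠ []) ∧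
  (∀ α ∈ T, ∀ k, 0 < k → k ≤ α.length → α.take k ∈ T) ∧
  (∀ α ∈ T, ∀ β ∈ T, α.length = 1 → β.length = 1 → α = β) ∧
  (∀ α ∈ T, ∀ t ∈ α, ((t : ℕ × Finset ℕ × ℤ).2.2 = 1 ∨ t.2.2 = -1) ∧ t.2.1.Nonempty) ∧
  (∀ α ∈ T, IsTerminalIn T α → mEnt α = 0 ∧ ∃ p : ℕ, iEnt α = {p}) ∧
  (∀ α ∈ T, ¬ IsTerminalIn T α → ∃ j : ℕ, mEnt α = m j ∧
    FamAdmissible (n j) ((childrenIn T α).image iEnt) ∧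
    iEnt α = (childrenIn T α).sup iEnt)

/-- The family `𝒢` of appropriate trees. -/
def 𝒢 (m n : ℕ → ℕ) : Set (Finset GNode) := {T | IsAppropriate m n T}

/-- The root of a tree. -/
def rootOf (T : Finset GNode) : GNode :=
  if h : (T.filter fun α => α.length = 1).Nonempty then h.choose else []

/-- `m(α)`: product of the `M`-entries of the predecessor of `α`. -/
def mWeight (α : GNode) : ℕ := (α.dropLast.map fun t => t.1).prod

/-- `ε(α)`: product of the signs of the proper predecessors of `α`. -/
def epsProd (α : GNode) : ℤ := (α.dropLast.map fun t => t.2.2).prod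

/-- `n(α)`: sum of the `n_i` over the `M`-entries `m_i` of the predecessor of `α`. -/
def nVal (m n : ℕ → ℕ) (α : GNode) : ℕ :=
  (α.dropLast.map fun t => n (sInf {j | m j = t.1})).sum

/-- The point `p_α` of a terminal node. -/
def pOf (α : GNode) : ℕ := minF (iEnt α)

/-- The measure `mu_𝒯` associated to a tree. -/
def treeMeasure (T : Finset GNode) : ℕ →₀ ℝ :=
  ∑ α ∈ T.filter (fun α => IsTerminalIn T α),
    ((mWeight α : ℝ)⁻¹ * ((epsProd α * sEnt α : ℤ) : ℝ)) • Finsupp.single (pOf α) (1 : ℝ)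

/-- The weight `w(𝒯)`. -/
def treeWeight (T : Finset GNode) : ℕ :=
  if T.card = 1 then 1 else mEnt (rootOf T)

/-- Action of a finitely supported measure on an element of `c₀₀`. -/
def mpair (mu x : ℕ →₀ ℝ) : ℝ := mu.sum fun i c => c * x i

/-- The norming set `𝓜 = {mu_𝒯 : 𝒯 ∈ 𝒢}`. -/
def normingSetOf (m n : ℕ → ℕ) : Set (ℕ →₀ ℝ) :=
  {mu | ∃ T ∈ 𝒢 m n, mu = treeMeasure T}

/-- The norm of `X_𝓜` on `c₀₀`. -/
def mNorm (m n : ℕ → ℕ) (x : ℕ →₀ ℝ) : ℝ :=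
  sSup {r : ℝ | ∃ mu ∈ normingSetOf m n, r = mpair mu x}

/-- A family of trees is `S_k`-admissible if the family of root intervals is. -/
def TreeFamAdmissible (k : ℕ) (G₀ : Finset (Finset GNode)) : Prop :=
  FamAdmissible k (G₀.image fun T => iEnt (rootOf T))

/-! ## The repeated averages hierarchy -/

/-- Auxiliary step for the repeated averages hierarchy. -/
def ravgS (f : Set ℕ → ℕ → (ℕ →₀ ℝ)) (R : Set ℕ) : ℕ → (ℕ →₀ ℝ)
  | 0 => ((sInf R : ℕ) : ℝ)⁻¹ • ∑ i ∈ Finset.range (sInf R), f R i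
  | k + 1 =>
    let R' : Set ℕ := {r ∈ R | ∀ j ∈ (ravgS f R k).support, j < r}
    ((sInf R' : ℕ) : ℝ)⁻¹ • ∑ i ∈ Finset.range (sInf R'), f R' i

/-- The repeated averages hierarchy `ξ_k^R` (`k` 0-indexed). -/
def ravg : ℕ → Set ℕ → ℕ → (ℕ →₀ ℝ)
  | 0 => fun R k => Finsupp.single (Nat.nth (· ∈ R) k) 1
  | ξ + 1 => ravgS (ravg ξ)

/-- `‖mu‖_k = sup{mu(F) : F ∈ S_k}`. -/
def measNorm (k : ℕ) (mu : ℕ →₀ ℝ) : ℝ :=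
  sSup {r : ℝ | ∃ F ∈ Schreier k, r = ∑ i ∈ F, mu i}

/-- The sequence of minima of supports of a block basis. -/
def pSeq (u : ℕ → ℕ →₀ ℝ) (k : ℕ) : ℕ := minSupp (u k)

/-- `v` is a generic `(ε, ξ)` average of the block basis `u`. -/
def IsGenericAvg (u : ℕ → ℕ →₀ ℝ) (ε : ℝ) (ξ : ℕ) (v : ℕ →₀ ℝ) : Prop :=
  ∃ R : Set ℕ, R.Infinite ∧ R ⊆ Set.range (pSeq u) ∧
    measNorm (ξ - 1) (ravg ξ R 0) < ε ∧
    v = (ravg ξ R 0).sum fun q c => c • u (sInf {k | pSeq u k = q})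

/-- `v` is an `(ε, ξ)` average of `u`: a generic `(ε, ξ)` average of a normalized
(w.r.t. the norm `nrm`) block basis of `u`. -/
def IsAvg (nrm : (ℕ →₀ ℝ) → ℝ) (u : ℕ → ℕ →₀ ℝ) (ε : ℝ) (ξ : ℕ) (v : ℕ →₀ ℝ) : Prop :=
  ∃ w : ℕ → ℕ →₀ ℝ, IsBlockSeqOf w u ∧ (∀ k, nrm (w k) = 1) ∧ IsGenericAvg w ε ξ v

/-- `x` is a smoothly normalized `(ε, ξ)` average of `u`. -/
def IsSmoothNormAvg (nrm : (ℕ →₀ ℝ) → ℝ) (u : ℕ → ℕ →₀ ℝ) (ε : ℝ) (ξ : ℕ)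
    (x : ℕ →₀ ℝ) : Prop :=
  ∃ v : ℕ →₀ ℝ, IsAvg nrm u ε ξ v ∧ (1 : ℝ) / 2 ≤ nrm v ∧ x = (nrm v)⁻¹ • v

/-! ## Infinite subsets of `ℕ` as points of the Cantor space -/

/-- The increasing enumeration of the set coded by `S : ℕ → Bool` (1st element = index 0). -/
def enumOf (S : ℕ → Bool) : ℕ → ℕ := Nat.nth fun i => S i = true

/-- The set coded by `S` is `M`-good. -/
def MGoodB (m l : ℕ → ℕ) (S : ℕ → Bool) : Prop := MGoodSeq m l (enumOf S)

/-- The infinite subsets of the set coded by `N₀`, as a topological (sub)space of the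
Cantor space `ℕ → Bool` with the product (pointwise convergence) topology. -/
def SubsetsOf (N₀ : ℕ → Bool) : Type :=
  {S : ℕ → Bool // {i | S i = true}.Infinite ∧ ∀ i, S i = true → N₀ i = true}

instance (N₀ : ℕ → Bool) : TopologicalSpace (SubsetsOf N₀) :=
  instTopologicalSpaceSubtype



/-! ## Auxiliary development -/

lemma empty_mem_schreier (n : ℕ) : (∅ : Finset ℕ) ∈ Schreier n := by
  cases n with
  | zero => simp [Schreier]
  | succ n => exact Or.inl rfl

lemma schreier_embed : ∀ (n : ℕ) (F G : Finset ℕ) (ψ : ℕ → ℕ),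
    (∀ a ∈ G, ∀ b ∈ G, a < b → ψ a < ψ b) →
    (∀ a ∈ G, ψ a ∈ F) → (∀ a ∈ G, ψ a ≤ a) →
    F ∈ Schreier n → G ∈ Schreier n := by
  intro n
  induction n with
  | zero =>
    intro F G ψ hmono hmem hle hF
    simp only [Schreier, Set.mem_setOf_eq] at hF ⊢
    have hinj : Set.InjOn ψ G := by
      intro a ha b hb hab
      rcases lt_trichotomy a b with h | h | h
      · exact absurd hab (hmono a ha b hb h).ne
      · exact h
      · exact absurd hab.symm (hmono b hb a ha h).ne
    exact le_trans (Finset.card_le_card_of_injOn ψ hmem hinj) hF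
  | succ n ih =>
    intro F G ψ hmono hmem hle hF
    rcases hF with hF | ⟨k, B, hk, hB, hord, hmin, hFeq⟩
    · subst hF
      left
      refine Finset.eq_empty_of_forall_notMem (fun a ha => ?_)
      exact absurd (hmem a ha) (Finset.notMem_empty _)
    rcases G.eq_empty_or_nonempty with rfl | hGne
    · exact Or.inl rfl
    right
    classical
    set used : Finset ℕ :=
      (Finset.range k).filter (fun i => (G.filter fun a => ψ a ∈ B i).Nonempty) with hused
    set L : List ℕ := used.sort (· ≤ ·) with hL
    have hLlen : L.length = used.card := Finset.length_sort _
    set C : ℕ → Finset ℕ := fun i => G.filter (fun a => ψ a ∈ B (L.getD i 0)) with hC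
    have hLget : ∀ i (h : i < L.length), L.getD i 0 = L.get ⟨i, h⟩ := by
      intro i h; exact List.getD_eq_get L 0 ⟨i, h⟩
    have hLmem : ∀ i (h : i < L.length), L.getD i 0 ∈ used := by
      intro i h
      rw [hLget i h]
      exact (Finset.mem_sort _).1 (L.get_mem _)
    have hLsorted : L.Pairwise (· < ·) := (Finset.sortedLT_sort used).pairwise
    have hLmono : ∀ i j (hi : i < j) (hj : j < L.length),
        L.getD i 0 < L.getD j 0 := by
      intro i j hij hj
      rw [hLget i (lt_trans hij hj), hLget j hj]
      exact List.pairwise_iff_get.1 hLsorted ⟨i, lt_trans hij hj⟩ ⟨j, hj⟩ hij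
    -- every element of G lands in some block
    have hcover : ∀ a ∈ G, ∃ i, ∃ h : i < L.length, a ∈ C i := by
      intro a ha
      have : ψ a ∈ (Finset.range k).biUnion B := by rw [← hFeq]; exact hmem a ha
      obtain ⟨i, hik, hiB⟩ := Finset.mem_biUnion.1 this
      have hiu : i ∈ used := by
        rw [hused]
        exact Finset.mem_filter.2 ⟨hik, ⟨a, Finset.mem_filter.2 ⟨ha, hiB⟩⟩⟩
      have : i ∈ L := (Finset.mem_sort _).2 hiu
      obtain ⟨idx, hidx⟩ := List.mem_iff_get.1 this
      refine ⟨idx, idx.isLt, ?_⟩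
      have h2 : L.getD idx 0 = i := by rw [hLget idx idx.isLt]; exact hidx
      show a ∈ G.filter (fun a => ψ a ∈ B (L.getD idx 0))
      exact Finset.mem_filter.2 ⟨ha, by rw [h2]; exact hiB⟩
    have hk' : 0 < L.length := by
      obtain ⟨a, ha⟩ := hGne
      obtain ⟨i, hi, _⟩ := hcover a ha
      exact lt_of_le_of_lt (Nat.zero_le i) hi
    have husedmem : ∀ i (h : i < L.length),
        L.getD i 0 < k ∧ (C i).Nonempty := by
      intro i h
      have := hLmem i h
      rw [hused, Finset.mem_filter, Finset.mem_range] at this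
      exact ⟨this.1, this.2⟩
    refine ⟨L.length, C, hk', ?_, ?_, ?_, ?_⟩
    · intro i hi
      obtain ⟨hik, hne⟩ := husedmem i hi
      refine ⟨?_, hne⟩
      refine ih (B (L.getD i 0)) (C i) ψ ?_ ?_ ?_ (hB _ hik).1
      · intro a ha b hb
        exact hmono a (Finset.mem_filter.1 ha).1 b (Finset.mem_filter.1 hb).1
      · intro a ha; exact (Finset.mem_filter.1 ha).2
      · intro a ha; exact hle a (Finset.mem_filter.1 ha).1
    · intro i j hij hj
      intro a ha b hb
      have haG := (Finset.mem_filter.1 ha).1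
      have hbG := (Finset.mem_filter.1 hb).1
      have hψ : ψ a < ψ b := by
        refine hord (L.getD i 0) (L.getD j 0) (hLmono i j hij hj) (husedmem j hj).1
          (ψ a) (Finset.mem_filter.1 ha).2 (ψ b) (Finset.mem_filter.1 hb).2
      by_contra hab
      push_neg at hab
      rcases eq_or_lt_of_le hab with h | h
      · rw [h] at hψ; exact lt_irrefl _ hψ
      · exact absurd hψ (not_lt_of_gt (hmono b hbG a haG h))
    · intro x hx
      have hxG := (Finset.mem_filter.1 hx).1
      have hxB : ψ x ∈ B (L.getD 0 0) := (Finset.mem_filter.1 hx).2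
      have hkψ : k ≤ ψ x := by
        rcases Nat.eq_zero_or_pos (L.getD 0 0) with h0 | h0
        · rw [h0] at hxB; exact hmin _ hxB
        · obtain ⟨y, hy⟩ := (hB 0 hk).2
          have : y < ψ x := hord 0 (L.getD 0 0) h0 (husedmem 0 hk').1 y hy (ψ x) hxB
          exact le_of_lt (lt_of_le_of_lt (hmin y hy) this)
      have hk'k : L.length ≤ k := by
        rw [hLlen, hused]
        exact le_trans (Finset.card_filter_le _ _) (by rw [Finset.card_range])
      exact le_trans hk'k (le_trans hkψ (hle x hxG))
    · ext a
      rw [Finset.mem_biUnion]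
      constructor
      · intro ha
        obtain ⟨i, hi, hmemi⟩ := hcover a ha
        exact ⟨i, Finset.mem_range.2 hi, hmemi⟩
      · rintro ⟨i, _, hmemi⟩
        exact (Finset.mem_filter.1 hmemi).1

lemma schreier_hereditary {n : ℕ} {F G : Finset ℕ} (h : G ⊆ F) (hF : F ∈ Schreier n) :
    G ∈ Schreier n :=
  schreier_embed n F G id (fun _ _ _ _ hab => hab) (fun a ha => h ha) (fun a _ => le_rfl) hF

/-! ### minF -/

lemma minF_mem {I : Finset ℕ} (h : I.Nonempty) : minF I ∈ I := by
  have : (I : Set ℕ).Nonempty := by exact_mod_cast h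
  exact_mod_cast Nat.sInf_mem this

lemma minF_le {I : Finset ℕ} {p : ℕ} (h : p ∈ I) : minF I ≤ p :=
  Nat.sInf_le (by exact_mod_cast h)

lemma minF_singleton (p : ℕ) : minF ({p} : Finset ℕ) = p := by
  have h1 : minF ({p} : Finset ℕ) ∈ ({p} : Finset ℕ) := minF_mem ⟨p, Finset.mem_singleton_self p⟩
  exact Finset.mem_singleton.1 h1

/-! ### mpair basics -/

lemma mpair_def (mu x : ℕ →₀ ℝ) : mpair mu x = ∑ i ∈ mu.support, mu i * x i := rfl

lemma mpair_eq_sum_support_right (mu x : ℕ →₀ ℝ) :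
    mpair mu x = ∑ i ∈ x.support, mu i * x i := by
  rw [mpair_def]
  have h1 : ∑ i ∈ mu.support, mu i * x i = ∑ i ∈ mu.support ∪ x.support, mu i * x i :=
    Finset.sum_subset Finset.subset_union_left
      (fun i _ hi => by rw [Finsupp.notMem_support_iff.1 hi, zero_mul])
  have h2 : ∑ i ∈ x.support, mu i * x i = ∑ i ∈ mu.support ∪ x.support, mu i * x i :=
    Finset.sum_subset Finset.subset_union_right
      (fun i _ hi => by rw [Finsupp.notMem_support_iff.1 hi, mul_zero])
  rw [h1, h2]

lemma mpair_sum_left {s : Finset GNode} (f : GNode → ℕ →₀ ℝ) (x : ℕ →₀ ℝ) :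
    mpair (∑ α ∈ s, f α) x = ∑ α ∈ s, mpair (f α) x := by
  simp only [mpair_eq_sum_support_right, Finsupp.finset_sum_apply, Finset.sum_mul]
  exact Finset.sum_comm

lemma mpair_single (p : ℕ) (c : ℝ) (x : ℕ →₀ ℝ) : mpair (Finsupp.single p c) x = c * x p :=
  Finsupp.sum_single_index (by simp)

lemma mpair_smul_single (p : ℕ) (c : ℝ) (x : ℕ →₀ ℝ) :
    mpair (c • Finsupp.single p (1 : ℝ)) x = c * x p := by
  rw [Finsupp.smul_single, smul_eq_mul, mul_one, mpair_single]

lemma mpair_sum_right (mu : ℕ →₀ ℝ) {ι : Type*} (s : Finset ι) (x : ι → ℕ →₀ ℝ) :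
    mpair mu (∑ i ∈ s, x i) = ∑ i ∈ s, mpair mu (x i) := by
  simp only [mpair_def, Finsupp.finset_sum_apply, Finset.mul_sum]
  exact Finset.sum_comm

lemma mpair_smul_right (mu : ℕ →₀ ℝ) (a : ℝ) (x : ℕ →₀ ℝ) :
    mpair mu (a • x) = a * mpair mu x := by
  simp only [mpair_def, Finsupp.smul_apply, smul_eq_mul, Finset.mul_sum]
  exact Finset.sum_congr rfl (fun i _ => by ring)

lemma mpair_zero_right (mu : ℕ →₀ ℝ) : mpair mu 0 = 0 := by
  simp [mpair_def]

/-! ### node entry lemmas -/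

lemma mEnt_concat (l : GNode) (t : ℕ × Finset ℕ × ℤ) : mEnt (l ++ [t]) = t.1 := by
  simp [mEnt, List.getLastD_concat]

lemma iEnt_concat (l : GNode) (t : ℕ × Finset ℕ × ℤ) : iEnt (l ++ [t]) = t.2.1 := by
  simp [iEnt, List.getLastD_concat]

lemma sEnt_concat (l : GNode) (t : ℕ × Finset ℕ × ℤ) : sEnt (l ++ [t]) = t.2.2 := by
  simp [sEnt, List.getLastD_concat]

lemma mWeight_concat (l : GNode) (t : ℕ × Finset ℕ × ℤ) :
    mWeight (l ++ [t]) = (l.map fun s => s.1).prod := by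
  simp [mWeight, List.dropLast_concat]

lemma epsProd_concat (l : GNode) (t : ℕ × Finset ℕ × ℤ) :
    epsProd (l ++ [t]) = (l.map fun s => s.2.2).prod := by
  simp [epsProd, List.dropLast_concat]

lemma exists_concat_of_ne_nil {α : GNode} (h : α ≠ []) :
    ∃ (l : GNode) (t : ℕ × Finset ℕ × ℤ), α = l ++ [t] ∧ l = α.dropLast ∧
      t.1 = mEnt α ∧ t.2.1 = iEnt α ∧ t.2.2 = sEnt α := by
  refine ⟨α.dropLast, α.getLast h, (List.dropLast_append_getLast h).symm, rfl, ?_, ?_, ?_⟩ <;>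
  · simp only [mEnt, iEnt, sEnt, List.getLastD_eq_getLast?, List.getLast?_eq_getLast h,
      Option.getD_some]

lemma mWeight_child {α : GNode} (hne : α ≠ []) (t : ℕ × Finset ℕ × ℤ) :
    mWeight (α ++ [t]) = mWeight α * mEnt α := by
  obtain ⟨l, s, h1, h2, h3, _, _⟩ := exists_concat_of_ne_nil hne
  rw [mWeight_concat]
  conv_lhs => rw [h1]
  rw [List.map_append, List.prod_append, List.map_singleton, List.prod_singleton, h3]
  rw [mWeight, ← h2]

lemma epsProd_child {α : GNode} (hne : α ≠ []) (t : ℕ × Finset ℕ × ℤ) :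
    epsProd (α ++ [t]) = epsProd α * sEnt α := by
  obtain ⟨l, s, h1, h2, _, _, h3⟩ := exists_concat_of_ne_nil hne
  rw [epsProd_concat]
  conv_lhs => rw [h1]
  rw [List.map_append, List.prod_append, List.map_singleton, List.prod_singleton, h3]
  rw [epsProd, ← h2]

lemma prefix_take_eq {α β : GNode} (h : α <+: β) : β.take α.length = α :=
  (List.prefix_iff_eq_take.1 h).symm

lemma prefix_of_prefix_length_le {α β γ : GNode} (h1 : α <+: γ) (h2 : β <+: γ)
    (h : α.length ≤ β.length) : α <+: β :=
  List.prefix_of_prefix_length_le h1 h2 h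

lemma child_eq_concat {α β : GNode} (hlen : β.length = α.length + 1) (hpre : α <+: β) :
    ∃ t, β = α ++ [t] := by
  obtain ⟨r, rfl⟩ := hpre
  rw [List.length_append] at hlen
  have : r.length = 1 := by omega
  obtain ⟨t, rfl⟩ := List.length_eq_one_iff.1 this
  exact ⟨t, rfl⟩

variable {m n : ℕ → ℕ} {T : Finset GNode}

namespace IsAppropriate

lemma nonempty' (hT : IsAppropriate m n T) : T.Nonempty := hT.1
lemma ne_nil (hT : IsAppropriate m n T) : ∀ α ∈ T, α ≠ [] := hT.2.1
lemma take_mem (hT : IsAppropriate m n T) :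
    ∀ α ∈ T, ∀ k, 0 < k → k ≤ α.length → α.take k ∈ T := hT.2.2.1
lemma root_unique (hT : IsAppropriate m n T) :
    ∀ α ∈ T, ∀ β ∈ T, α.length = 1 → β.length = 1 → α = β := hT.2.2.2.1
lemma entries (hT : IsAppropriate m n T) :
    ∀ α ∈ T, ∀ t ∈ α, ((t : ℕ × Finset ℕ × ℤ).2.2 = 1 ∨ t.2.2 = -1) ∧ t.2.1.Nonempty :=
  hT.2.2.2.2.1
lemma terminal_spec (hT : IsAppropriate m n T) :
    ∀ α ∈ T, IsTerminalIn T α → mEnt α = 0 ∧ ∃ p : ℕ, iEnt α = {p} := hT.2.2.2.2.2.1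
lemma nonterminal_spec (hT : IsAppropriate m n T) :
    ∀ α ∈ T, ¬ IsTerminalIn T α → ∃ j : ℕ, mEnt α = m j ∧
      FamAdmissible (n j) ((childrenIn T α).image iEnt) ∧
      iEnt α = (childrenIn T α).sup iEnt := hT.2.2.2.2.2.2

lemma len_pos (hT : IsAppropriate m n T) {α : GNode} (hα : α ∈ T) : 0 < α.length :=
  List.length_pos_iff.2 (hT.ne_nil α hα)

end IsAppropriate

lemma mem_childrenIn {α β : GNode} :
    β ∈ childrenIn T α ↔ β ∈ T ∧ β.length = α.length + 1 ∧ α <+: β := by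
  simp [childrenIn, Finset.mem_filter, and_assoc]

lemma rootOf_spec (hT : IsAppropriate m n T) :
    rootOf T ∈ T ∧ (rootOf T).length = 1 ∧ ∀ α ∈ T, α.take 1 = rootOf T := by
  have hne : (T.filter fun α => α.length = 1).Nonempty := by
    obtain ⟨α, hα⟩ := hT.nonempty'
    refine ⟨α.take 1, Finset.mem_filter.2 ⟨hT.take_mem α hα 1 one_pos (hT.len_pos hα), ?_⟩⟩
    simp [List.length_take, Nat.min_eq_left (hT.len_pos hα)]
  have hr : rootOf T = hne.choose := by rw [rootOf, dif_pos hne]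
  have hspec := hne.choose_spec
  rw [Finset.mem_filter] at hspec
  refine ⟨hr ▸ hspec.1, hr ▸ hspec.2, fun α hα => ?_⟩
  have h1 : α.take 1 ∈ T := hT.take_mem α hα 1 one_pos (hT.len_pos hα)
  have h2 : (α.take 1).length = 1 := by
    simp [List.length_take, Nat.min_eq_left (hT.len_pos hα)]
  rw [hr]
  exact hT.root_unique _ h1 _ hspec.1 h2 hspec.2

lemma root_prefix (hT : IsAppropriate m n T) {α : GNode} (hα : α ∈ T) : rootOf T <+: α := by
  rw [← (rootOf_spec hT).2.2 α hα]
  exact List.take_prefix 1 α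

lemma prefix_proper_length {α β : GNode} (h : α <+: β) (hne : α ≠ β) :
    α.length < β.length :=
  lt_of_le_of_ne h.length_le (fun hl => hne (h.eq_of_length hl))

lemma not_terminal_of_proper (hT : IsAppropriate m n T) {α β : GNode} (hβ : β ∈ T)
    (hpre : α <+: β) (hne : β ≠ α) : ¬ IsTerminalIn T α :=
  fun h => hne (h β hβ hpre)

/-- every non-root node is a child of its `take (len - 1)`. -/
lemma parent_spec (hT : IsAppropriate m n T) {β : GNode} (hβ : β ∈ T) (h2 : 2 ≤ β.length) :
    β.take (β.length - 1) ∈ T ∧ β ∈ childrenIn T (β.take (β.length - 1)) := by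
  have hmem : β.take (β.length - 1) ∈ T := hT.take_mem β hβ _ (by omega) (by omega)
  refine ⟨hmem, mem_childrenIn.2 ⟨hβ, ?_, List.take_prefix _ _⟩⟩
  simp [List.length_take]; omega

lemma iEnt_subset_of_prefix (hT : IsAppropriate m n T) :
    ∀ (N : ℕ) (β : GNode), β.length ≤ N → β ∈ T → ∀ α, α ∈ T → α <+: β →
      iEnt β ⊆ iEnt α := by
  intro N
  induction N with
  | zero =>
    intro β hlen hβ α hα hpre
    exact absurd (List.length_eq_zero_iff.1 (Nat.le_zero.1 hlen)) (hT.ne_nil β hβ)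
  | succ N ihN =>
    intro β hlen hβ α hα hpre
    rcases eq_or_ne α β with rfl | hne
    · exact subset_rfl
    have hlt : α.length < β.length := prefix_proper_length hpre hne
    have hα1 : 0 < α.length := hT.len_pos hα
    obtain ⟨hβ₀T, hchild⟩ := parent_spec hT hβ (by omega)
    have hβ₀len : (β.take (β.length - 1)).length = β.length - 1 := by
      rw [List.length_take]; omega
    have hβ₀nt : ¬ IsTerminalIn T (β.take (β.length - 1)) := by
      refine not_terminal_of_proper hT hβ (List.take_prefix _ _) ?_
      intro h
      have h2 := congrArg List.length h
      rw [hβ₀len] at h2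
      omega
    obtain ⟨j', _, _, hsup⟩ := hT.nonterminal_spec _ hβ₀T hβ₀nt
    have h1 : iEnt β ⊆ iEnt (β.take (β.length - 1)) := by
      rw [hsup]
      exact Finset.le_sup (f := iEnt) hchild
    have hpre₀ : α <+: β.take (β.length - 1) := by
      refine prefix_of_prefix_length_le hpre (List.take_prefix _ _) ?_
      rw [hβ₀len]; omega
    exact subset_trans h1 (ihN _ (by rw [hβ₀len]; omega) hβ₀T α hα hpre₀)

lemma iEnt_subset (hT : IsAppropriate m n T) {α β : GNode} (hβ : β ∈ T) (hα : α ∈ T)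
    (hpre : α <+: β) : iEnt β ⊆ iEnt α :=
  iEnt_subset_of_prefix hT β.length β le_rfl hβ α hα hpre

lemma terminal_iEnt (hT : IsAppropriate m n T) {α : GNode} (hα : α ∈ T)
    (ht : IsTerminalIn T α) : iEnt α = {pOf α} := by
  obtain ⟨_, p, hp⟩ := hT.terminal_spec α hα ht
  rw [hp, pOf, hp, minF_singleton]

lemma pOf_mem_iEnt (hT : IsAppropriate m n T) {α : GNode} (hα : α ∈ T)
    (ht : IsTerminalIn T α) : pOf α ∈ iEnt α := by
  rw [terminal_iEnt hT hα ht]; exact Finset.mem_singleton_self _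

/-- Point covering by children. -/
lemma exists_child_mem (hT : IsAppropriate m n T) {α : GNode} (hα : α ∈ T)
    (hnt : ¬ IsTerminalIn T α) {q : ℕ} (hq : q ∈ iEnt α) :
    ∃ c ∈ childrenIn T α, q ∈ iEnt c := by
  obtain ⟨j', _, _, hsup⟩ := hT.nonterminal_spec α hα hnt
  rw [hsup] at hq
  exact Finset.mem_sup.1 hq

/-- Children whose intervals share a point have equal intervals. -/
lemma children_iEnt_eq (hT : IsAppropriate m n T) {α : GNode} (hα : α ∈ T)
    (hnt : ¬ IsTerminalIn T α) {c c' : GNode} (hc : c ∈ childrenIn T α)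
    (hc' : c' ∈ childrenIn T α) {q : ℕ} (hq : q ∈ iEnt c) (hq' : q ∈ iEnt c') :
    iEnt c = iEnt c' := by
  obtain ⟨j', _, hadm, _⟩ := hT.nonterminal_spec α hα hnt
  by_contra hne
  rcases hadm.2.1 (iEnt c) (Finset.mem_image_of_mem _ hc) (iEnt c')
      (Finset.mem_image_of_mem _ hc') hne with h | h
  · exact lt_irrefl q (h q hq q hq')
  · exact lt_irrefl q (h q hq' q hq)

/-- Entries in dropLast carry values `m j`. -/
lemma dropLast_mEnt (hT : IsAppropriate m n T) {α : GNode} (hα : α ∈ T) :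
    ∀ t ∈ α.dropLast, ∃ j, t.1 = m j := by
  intro t ht
  obtain ⟨i, hi, hget⟩ := List.mem_iff_getElem.1 ht
  have hilt : i < α.length - 1 := by
    have := hi; rwa [List.length_dropLast] at this
  have hialt : i < α.length := by omega
  have hγT : α.take (i + 1) ∈ T := hT.take_mem α hα _ (Nat.succ_pos _) (by omega)
  have hγlen : (α.take (i + 1)).length = i + 1 := by rw [List.length_take]; omega
  have hγnt : ¬ IsTerminalIn T (α.take (i + 1)) := by
    refine not_terminal_of_proper hT hα (List.take_prefix _ _) ?_
    intro h
    have h2 := congrArg List.length h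
    rw [hγlen] at h2
    omega
  obtain ⟨j, hj, _, _⟩ := hT.nonterminal_spec _ hγT hγnt
  refine ⟨j, ?_⟩
  have hγc : α.take (i + 1) = α.take i ++ [α[i]] := by
    rw [List.take_succ, List.getElem?_eq_getElem hialt]
    rfl
  have : mEnt (α.take (i + 1)) = α[i].1 := by rw [hγc, mEnt_concat]
  rw [← hget, List.getElem_dropLast, ← this, hj]

lemma mEnt_ge_of_nonterminal (hml : MLParams m l') (hT : IsAppropriate m n T) {α : GNode}
    (hα : α ∈ T) (hnt : ¬ IsTerminalIn T α) : 7 ≤ mEnt α := by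
  obtain ⟨j, hj, _, _⟩ := hT.nonterminal_spec α hα hnt
  rw [hj]
  have h0 : 6 < m 0 := hml.m_six
  rcases Nat.eq_zero_or_pos j with rfl | hpos
  · omega
  · have := hml.m_mono hpos
    omega

variable {m n l' : ℕ → ℕ} {T : Finset GNode}

/-! ### growth of `m` -/

lemma m_ge_pow (hml : MLParams m l') : ∀ i, 7 ^ (i + 1) ≤ m i := by
  intro i
  induction i with
  | zero => have := hml.m_six; simp; omega
  | succ i ih =>
    have h1 : m i ^ 2 < m (i + 1) := hml.m_sq i
    have h7 : 7 ≤ 7 ^ (i + 1) := Nat.le_self_pow (Nat.succ_ne_zero i) 7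
    calc 7 ^ (i + 1 + 1) = 7 * 7 ^ (i + 1) := by ring
    _ ≤ 7 ^ (i + 1) * 7 ^ (i + 1) := by nlinarith
    _ ≤ m i * m i := Nat.mul_le_mul ih ih
    _ = m i ^ 2 := (sq (m i)).symm
    _ ≤ m (i + 1) := le_of_lt h1

lemma m_ge_seven (hml : MLParams m l') (i : ℕ) : 7 ≤ m i :=
  le_trans (Nat.le_self_pow (Nat.succ_ne_zero i) 7) (m_ge_pow hml i)

lemma sum_inv_m_le (hml : MLParams m l') (S : Finset ℕ) :
    ∑ i ∈ S, ((m i : ℝ))⁻¹ ≤ 1 / 6 := by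
  have hgeo : HasSum (fun i : ℕ => (7 : ℝ)⁻¹ ^ (i + 1)) ((7 : ℝ)⁻¹ * (1 - (7:ℝ)⁻¹)⁻¹) := by
    have h := (hasSum_geometric_of_lt_one (by norm_num : (0:ℝ) ≤ (7:ℝ)⁻¹)
      (by norm_num : (7:ℝ)⁻¹ < 1)).mul_left ((7:ℝ)⁻¹)
    refine h.congr_fun (fun i => ?_)
    rw [pow_succ']
  have hle : ∑ i ∈ S, ((m i : ℝ))⁻¹ ≤ ∑ i ∈ S, (7 : ℝ)⁻¹ ^ (i + 1) := by
    refine Finset.sum_le_sum (fun i _ => ?_)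
    rw [inv_pow]
    have h1 : (0:ℝ) < (7:ℝ) ^ (i+1) := by positivity
    have h2 : ((7:ℕ):ℝ) ^ (i+1) ≤ (m i : ℝ) := by
      rw [← Nat.cast_pow]
      exact_mod_cast m_ge_pow hml i
    exact inv_anti₀ h1 (by exact_mod_cast h2)
  refine le_trans hle (le_trans (sum_le_hasSum S (fun i _ => by positivity) hgeo) ?_)
  norm_num

/-! ### signs -/

lemma int_prod_pm : ∀ (L : List ℤ), (∀ s ∈ L, s = 1 ∨ s = -1) → L.prod = 1 ∨ L.prod = -1 := by
  intro L
  induction L with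
  | nil => intro _; left; rfl
  | cons a L ih =>
    intro h
    have ha := h a List.mem_cons_self
    have hL := ih (fun s hs => h s (List.mem_cons_of_mem a hs))
    rw [List.prod_cons]
    rcases ha with rfl | rfl <;> rcases hL with h2 | h2 <;> rw [h2] <;> norm_num

lemma epsProd_pm (hT : IsAppropriate m n T) {α : GNode} (hα : α ∈ T) :
    epsProd α = 1 ∨ epsProd α = -1 := by
  refine int_prod_pm _ (fun s hs => ?_)
  obtain ⟨t, ht, rfl⟩ := List.mem_map.1 hs
  exact (hT.entries α hα t (List.dropLast_sublist α |>.subset ht)).1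

lemma sEnt_pm (hT : IsAppropriate m n T) {α : GNode} (hα : α ∈ T) :
    sEnt α = 1 ∨ sEnt α = -1 := by
  obtain ⟨L, t, h1, _, _, _, h3⟩ := exists_concat_of_ne_nil (hT.ne_nil α hα)
  have ht : t ∈ α := by rw [h1]; exact List.mem_append_right _ (List.mem_singleton_self t)
  rw [← h3]
  exact (hT.entries α hα t ht).1

lemma coef_abs (hT : IsAppropriate m n T) {α : GNode} (hα : α ∈ T) :
    |((epsProd α * sEnt α : ℤ) : ℝ)| = 1 := by
  rcases epsProd_pm hT hα with h1 | h1 <;> rcases sEnt_pm hT hα with h2 | h2 <;>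
    rw [h1, h2] <;> norm_num

lemma mWeight_pos (hml : MLParams m l') (hT : IsAppropriate m n T) {α : GNode} (hα : α ∈ T) :
    0 < mWeight α := by
  rw [mWeight]
  refine List.prod_pos (fun a ha => ?_)
  obtain ⟨t, ht, rfl⟩ := List.mem_map.1 ha
  obtain ⟨j, hj⟩ := dropLast_mEnt hT hα t ht
  rw [hj]
  exact lt_of_lt_of_le (by norm_num) (m_ge_seven hml j)

/-! ### exists child -/

lemma exists_child (hT : IsAppropriate m n T) {α : GNode} (hα : α ∈ T)
    (hnt : ¬ IsTerminalIn T α) : ∃ c, c ∈ childrenIn T α := by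
  rw [IsTerminalIn] at hnt
  push_neg at hnt
  obtain ⟨β, hβ, hpre, hne⟩ := hnt
  have hlt : α.length < β.length := prefix_proper_length hpre (Ne.symm hne)
  refine ⟨β.take (α.length + 1), mem_childrenIn.2 ⟨hT.take_mem β hβ _ (Nat.succ_pos _) (by omega),
    ?_, ?_⟩⟩
  · rw [List.length_take]; omega
  · refine prefix_of_prefix_length_le hpre (List.take_prefix _ _) ?_
    rw [List.length_take]; omega

lemma child_concat (hT : IsAppropriate m n T) {α c : GNode} (hc : c ∈ childrenIn T α) :
    ∃ t, c = α ++ [t] := by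
  obtain ⟨_, hlen, hpre⟩ := mem_childrenIn.1 hc
  exact child_eq_concat hlen hpre

lemma mWeight_of_child (hT : IsAppropriate m n T) {α c : GNode} (hα : α ∈ T)
    (hc : c ∈ childrenIn T α) : mWeight c = mWeight α * mEnt α := by
  obtain ⟨t, rfl⟩ := child_concat hT hc
  exact mWeight_child (hT.ne_nil α hα) t

variable {m n l' : ℕ → ℕ} {T : Finset GNode}

/-- Restricted mass of the subtree at `α`. -/
def TW (T : Finset GNode) (α : GNode) (p : ℕ) : ℝ :=
  ∑ δ ∈ T.filter (fun δ => IsTerminalIn T δ ∧ α <+: δ ∧ pOf δ = p), ((mWeight δ : ℝ))⁻¹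

lemma TW_nonneg (T : Finset GNode) (α : GNode) (p : ℕ) : 0 ≤ TW T α p :=
  Finset.sum_nonneg (fun δ _ => by positivity)

lemma TW_terminal (hT : IsAppropriate m n T) {α : GNode} (hα : α ∈ T)
    (ht : IsTerminalIn T α) (p : ℕ) :
    TW T α p = if pOf α = p then (mWeight α : ℝ)⁻¹ else 0 := by
  have hset : T.filter (fun δ => IsTerminalIn T δ ∧ α <+: δ ∧ pOf δ = p)
      = if pOf α = p then {α} else ∅ := by
    ext δ
    rw [Finset.mem_filter]
    constructor
    · rintro ⟨hδT, _, hpre, hp⟩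
      have : δ = α := ht δ hδT hpre
      subst this
      rw [if_pos hp]
      exact Finset.mem_singleton_self _
    · intro hδ
      by_cases hp : pOf α = p
      · rw [if_pos hp] at hδ
        rw [Finset.mem_singleton] at hδ
        subst hδ
        exact ⟨hα, ht, List.prefix_refl _, hp⟩
      · rw [if_neg hp] at hδ
        exact absurd hδ (Finset.notMem_empty _)
  rw [TW, hset]
  by_cases hp : pOf α = p
  · rw [if_pos hp, if_pos hp, Finset.sum_singleton]
  · rw [if_neg hp, if_neg hp, Finset.sum_empty]

lemma TW_eq_zero (hT : IsAppropriate m n T) {α : GNode} (hα : α ∈ T) {p : ℕ}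
    (hp : p ∉ iEnt α) : TW T α p = 0 := by
  rw [TW]
  have : T.filter (fun δ => IsTerminalIn T δ ∧ α <+: δ ∧ pOf δ = p) = ∅ := by
    refine Finset.eq_empty_of_forall_notMem (fun δ hδ => ?_)
    rw [Finset.mem_filter] at hδ
    obtain ⟨hδT, hterm, hpre, hpδ⟩ := hδ
    refine hp ?_
    rw [← hpδ]
    exact iEnt_subset hT hδT hα hpre (pOf_mem_iEnt hT hδT hterm)
  rw [this, Finset.sum_empty]

lemma TW_split (hT : IsAppropriate m n T) {α : GNode} (hα : α ∈ T)
    (hnt : ¬ IsTerminalIn T α) (p : ℕ) :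
    TW T α p = ∑ c ∈ childrenIn T α, TW T c p := by
  have hset : T.filter (fun δ => IsTerminalIn T δ ∧ α <+: δ ∧ pOf δ = p)
      = (childrenIn T α).biUnion
        (fun c => T.filter (fun δ => IsTerminalIn T δ ∧ c <+: δ ∧ pOf δ = p)) := by
    ext δ
    rw [Finset.mem_filter, Finset.mem_biUnion]
    constructor
    · rintro ⟨hδT, hterm, hpre, hp⟩
      have hne : δ ≠ α := by rintro rfl; exact hnt hterm
      have hlt : α.length < δ.length := prefix_proper_length hpre (Ne.symm hne)
      refine ⟨δ.take (α.length + 1), mem_childrenIn.2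
        ⟨hT.take_mem δ hδT _ (Nat.succ_pos _) (by omega), by rw [List.length_take]; omega,
          prefix_of_prefix_length_le hpre (List.take_prefix _ _)
            (by rw [List.length_take]; omega)⟩, Finset.mem_filter.2
        ⟨hδT, hterm, List.take_prefix _ _, hp⟩⟩
    · rintro ⟨c, hc, hδ⟩
      rw [Finset.mem_filter] at hδ
      obtain ⟨hδT, hterm, hpre, hp⟩ := hδ
      exact ⟨hδT, hterm, (mem_childrenIn.1 hc).2.2.trans hpre, hp⟩
  have hdisj : (↑(childrenIn T α) : Set GNode).PairwiseDisjoint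
      (fun c => T.filter (fun δ => IsTerminalIn T δ ∧ c <+: δ ∧ pOf δ = p)) := by
    intro c hc c' hc' hne
    simp only [Finset.mem_coe] at hc hc'
    refine Finset.disjoint_left.2 (fun δ hδ hδ' => ?_)
    rw [Finset.mem_filter] at hδ hδ'
    refine hne ?_
    have h1 : δ.take c.length = c := prefix_take_eq hδ.2.2.1
    have h2 : δ.take c'.length = c' := prefix_take_eq hδ'.2.2.1
    have hl : c.length = c'.length := by
      rw [(mem_childrenIn.1 hc).2.1, (mem_childrenIn.1 hc').2.1]
    rw [← h1, ← h2, hl]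
  rw [TW, hset, Finset.sum_biUnion hdisj]
  rfl

/-- key combinatorial bound: the weighted count of children containing `p` -/
lemma children_g_sum_le (hml : MLParams m l') (hT : IsAppropriate m n T) {α : GNode}
    (hα : α ∈ T) (hnt : ¬ IsTerminalIn T α) (p : ℕ) :
    ∑ c ∈ (childrenIn T α).filter (fun c => p ∈ iEnt c),
      (if IsTerminalIn T c then (1:ℝ) else 3 * (mEnt c : ℝ)⁻¹) ≤ 3 := by
  set Cp := (childrenIn T α).filter (fun c => p ∈ iEnt c) with hCp
  have hCpmem : ∀ c ∈ Cp, c ∈ childrenIn T α ∧ p ∈ iEnt c := by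
    intro c hc; rw [hCp, Finset.mem_filter] at hc; exact hc
  have hCpT : ∀ c ∈ Cp, c ∈ T := fun c hc => (mem_childrenIn.1 (hCpmem c hc).1).1
  -- injectivity of (mEnt, sEnt) on Cp
  have hinj : ∀ c ∈ Cp, ∀ c' ∈ Cp, mEnt c = mEnt c' → sEnt c = sEnt c' → c = c' := by
    intro c hc c' hc' h1 h2
    have hIeq : iEnt c = iEnt c' :=
      children_iEnt_eq hT hα hnt (hCpmem c hc).1 (hCpmem c' hc').1
        (hCpmem c hc).2 (hCpmem c' hc').2
    obtain ⟨t, rfl⟩ := child_concat hT (hCpmem c hc).1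
    obtain ⟨t', rfl⟩ := child_concat hT (hCpmem c' hc').1
    rw [mEnt_concat, mEnt_concat] at h1
    rw [sEnt_concat, sEnt_concat] at h2
    rw [iEnt_concat, iEnt_concat] at hIeq
    have : t = t' := Prod.ext h1 (Prod.ext hIeq h2)
    rw [this]
  -- the summand factors through mEnt
  have hfac : ∀ c ∈ Cp, (if IsTerminalIn T c then (1:ℝ) else 3 * (mEnt c : ℝ)⁻¹)
      = (if mEnt c = 0 then (1:ℝ) else 3 * (mEnt c : ℝ)⁻¹) := by
    intro c hc
    by_cases ht : IsTerminalIn T c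
    · rw [if_pos ht, if_pos (hT.terminal_spec c (hCpT c hc) ht).1]
    · rw [if_neg ht, if_neg]
      have := mEnt_ge_of_nonterminal hml hT (hCpT c hc) ht
      omega
  rw [Finset.sum_congr rfl hfac]
  -- split by sign
  have hsplit := Finset.sum_filter_add_sum_filter_not Cp (fun c => sEnt c = 1)
    (fun c => (if mEnt c = 0 then (1:ℝ) else 3 * (mEnt c : ℝ)⁻¹))
  rw [← hsplit]
  have key : ∀ Q : Finset GNode, Q ⊆ Cp → (∀ c ∈ Q, ∀ c' ∈ Q, sEnt c = sEnt c') →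
      ∑ c ∈ Q, (if mEnt c = 0 then (1:ℝ) else 3 * (mEnt c : ℝ)⁻¹) ≤ 3 / 2 := by
    intro Q hQ hsgn
    have hme : ∀ c ∈ Q, ∀ c' ∈ Q, mEnt c = mEnt c' → c = c' := by
      intro c hc c' hc' h1
      exact hinj c (hQ hc) c' (hQ hc') h1 (hsgn c hc c' hc')
    have himg : ∑ e ∈ Q.image mEnt, (if e = 0 then (1:ℝ) else 3 * (e : ℝ)⁻¹)
        = ∑ c ∈ Q, (if mEnt c = 0 then (1:ℝ) else 3 * (mEnt c : ℝ)⁻¹) :=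
      Finset.sum_image hme
    rw [← himg]
    set Y := Q.image mEnt with hY
    have hYm : ∀ e ∈ Y, e ≠ 0 → ∃ j, e = m j := by
      intro e he hne
      rw [hY, Finset.mem_image] at he
      obtain ⟨c, hc, rfl⟩ := he
      have hcT : c ∈ T := hCpT c (hQ hc)
      have hcnt : ¬ IsTerminalIn T c := by
        intro ht
        exact hne (hT.terminal_spec c hcT ht).1
      obtain ⟨j, hj, _, _⟩ := hT.nonterminal_spec c hcT hcnt
      exact ⟨j, hj⟩
    -- bound the sum over Y
    have hsub : Y ⊆ insert 0 (Y.erase 0) := by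
      intro e he
      rcases eq_or_ne e 0 with rfl | hne
      · exact Finset.mem_insert_self _ _
      · exact Finset.mem_insert_of_mem (Finset.mem_erase.2 ⟨hne, he⟩)
    have hnonneg : ∀ e : ℕ, (0:ℝ) ≤ (if e = 0 then (1:ℝ) else 3 * (e : ℝ)⁻¹) := by
      intro e; split <;> positivity
    calc ∑ e ∈ Y, (if e = 0 then (1:ℝ) else 3 * (e : ℝ)⁻¹)
        ≤ ∑ e ∈ insert 0 (Y.erase 0), (if e = 0 then (1:ℝ) else 3 * (e : ℝ)⁻¹) :=
          Finset.sum_le_sum_of_subset_of_nonneg hsub (fun e _ _ => hnonneg e)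
      _ = 1 + ∑ e ∈ Y.erase 0, (if e = 0 then (1:ℝ) else 3 * (e : ℝ)⁻¹) := by
          rw [Finset.sum_insert (Finset.notMem_erase 0 Y), if_pos rfl]
      _ = 1 + ∑ e ∈ Y.erase 0, 3 * (e : ℝ)⁻¹ := by
          congr 1
          refine Finset.sum_congr rfl (fun e he => ?_)
          rw [if_neg (Finset.mem_erase.1 he).1]
      _ ≤ 1 + 3 * (1 / 6) := by
          have : ∑ e ∈ Y.erase 0, 3 * (e : ℝ)⁻¹ = 3 * ∑ e ∈ Y.erase 0, (e : ℝ)⁻¹ := by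
            rw [Finset.mul_sum]
          rw [this]
          have hidx : ∀ e ∈ Y.erase 0, ∃ j, e = m j := by
            intro e he
            exact hYm e (Finset.mem_erase.1 he).2 (Finset.mem_erase.1 he).1
          -- reindex through m
          set ν : ℕ → ℕ := fun e => if h : ∃ j, e = m j then h.choose else 0 with hν
          have hνm : ∀ e ∈ Y.erase 0, m (ν e) = e := by
            intro e he
            have h := hidx e he
            rw [hν]
            simp only [dif_pos h]
            exact h.choose_spec.symm
          have hνinj : ∀ e ∈ Y.erase 0, ∀ e' ∈ Y.erase 0, ν e = ν e' → e = e' := by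
            intro e he e' he' h
            rw [← hνm e he, ← hνm e' he', h]
          have hrw : ∑ j ∈ (Y.erase 0).image ν, ((m j : ℝ))⁻¹
              = ∑ e ∈ Y.erase 0, ((m (ν e) : ℝ))⁻¹ := Finset.sum_image hνinj
          have hrw2 : ∑ e ∈ Y.erase 0, ((m (ν e) : ℝ))⁻¹ = ∑ e ∈ Y.erase 0, ((e : ℝ))⁻¹ :=
            Finset.sum_congr rfl (fun e he => by rw [hνm e he])
          have := sum_inv_m_le hml ((Y.erase 0).image ν)
          rw [hrw, hrw2] at this
          gcongr
      _ = 3 / 2 := by norm_num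
  have h1 := key (Cp.filter (fun c => sEnt c = 1)) (Finset.filter_subset _ _)
    (fun c hc c' hc' => by
      rw [Finset.mem_filter] at hc hc'; rw [hc.2, hc'.2])
  have h2 := key (Cp.filter (fun c => ¬ sEnt c = 1)) (Finset.filter_subset _ _)
    (fun c hc c' hc' => by
      rw [Finset.mem_filter] at hc hc'
      have hc1 := sEnt_pm hT (hCpT c hc.1)
      have hc2 := sEnt_pm hT (hCpT c' hc'.1)
      rcases hc1 with h | h
      · exact absurd h hc.2
      · rcases hc2 with h' | h'
        · exact absurd h' hc'.2
        · rw [h, h'])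
  linarith

variable {m n l' : ℕ → ℕ} {T : Finset GNode}

lemma TW_le_aux (hml : MLParams m l') (hT : IsAppropriate m n T) :
    ∀ (d : ℕ) (α : GNode), α ∈ T → T.sup List.length ≤ α.length + d → ∀ p,
      TW T α p ≤ (mWeight α : ℝ)⁻¹ ∧
        (¬ IsTerminalIn T α → TW T α p ≤ (mWeight α : ℝ)⁻¹ * ((mEnt α : ℝ)⁻¹ * 3)) := by
  intro d
  induction d with
  | zero =>
    intro α hα hd p
    have hterm : IsTerminalIn T α := by
      by_contra hnt
      obtain ⟨c, hc⟩ := exists_child hT hα hnt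
      obtain ⟨hcT, hclen, _⟩ := mem_childrenIn.1 hc
      have : c.length ≤ T.sup List.length := Finset.le_sup hcT
      omega
    refine ⟨?_, fun hnt => absurd hterm hnt⟩
    rw [TW_terminal hT hα hterm p]
    split
    · exact le_rfl
    · positivity
  | succ d ih =>
    intro α hα hd p
    by_cases hterm : IsTerminalIn T α
    · refine ⟨?_, fun hnt => absurd hterm hnt⟩
      rw [TW_terminal hT hα hterm p]
      split
      · exact le_rfl
      · positivity
    · have hstep : TW T α p ≤ (mWeight α : ℝ)⁻¹ * ((mEnt α : ℝ)⁻¹ * 3) := by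
        rw [TW_split hT hα hterm p]
        have hzero : ∀ c ∈ childrenIn T α, c ∉ (childrenIn T α).filter (fun c => p ∈ iEnt c) →
            TW T c p = 0 := by
          intro c hc hnc
          have hp : p ∉ iEnt c := by
            intro hp
            exact hnc (Finset.mem_filter.2 ⟨hc, hp⟩)
          exact TW_eq_zero hT (mem_childrenIn.1 hc).1 hp
        have hsum : ∑ c ∈ childrenIn T α, TW T c p
            = ∑ c ∈ (childrenIn T α).filter (fun c => p ∈ iEnt c), TW T c p := by
          symm
          refine Finset.sum_filter_of_ne (fun c hc hne => ?_)
          by_contra hp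
          exact hne (TW_eq_zero hT (mem_childrenIn.1 hc).1 hp)
        rw [hsum]
        have hbound : ∀ c ∈ (childrenIn T α).filter (fun c => p ∈ iEnt c),
            TW T c p ≤ (mWeight α : ℝ)⁻¹ * (mEnt α : ℝ)⁻¹ *
              (if IsTerminalIn T c then (1:ℝ) else 3 * (mEnt c : ℝ)⁻¹) := by
          intro c hc
          have hc' := (Finset.mem_filter.1 hc).1
          obtain ⟨hcT, hclen, _⟩ := mem_childrenIn.1 hc'
          have hcw : mWeight c = mWeight α * mEnt α := mWeight_of_child hT hα hc'
          have hdc : T.sup List.length ≤ c.length + d := by omega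
          have hwac : ((mWeight c : ℕ) : ℝ)⁻¹ = (mWeight α : ℝ)⁻¹ * (mEnt α : ℝ)⁻¹ := by
            rw [hcw, Nat.cast_mul, mul_inv]
          rcases ih c hcT hdc p with ⟨h1, h2⟩
          by_cases htc : IsTerminalIn T c
          · rw [if_pos htc, mul_one]
            rw [hwac] at h1
            exact h1
          · rw [if_neg htc]
            have := h2 htc
            rw [hwac] at this
            calc TW T c p ≤ (mWeight α : ℝ)⁻¹ * (mEnt α : ℝ)⁻¹ * ((mEnt c : ℝ)⁻¹ * 3) := this
            _ = (mWeight α : ℝ)⁻¹ * (mEnt α : ℝ)⁻¹ * (3 * (mEnt c : ℝ)⁻¹) := by ring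
        calc ∑ c ∈ (childrenIn T α).filter (fun c => p ∈ iEnt c), TW T c p
            ≤ ∑ c ∈ (childrenIn T α).filter (fun c => p ∈ iEnt c),
              (mWeight α : ℝ)⁻¹ * (mEnt α : ℝ)⁻¹ *
                (if IsTerminalIn T c then (1:ℝ) else 3 * (mEnt c : ℝ)⁻¹) :=
              Finset.sum_le_sum hbound
          _ = (mWeight α : ℝ)⁻¹ * (mEnt α : ℝ)⁻¹ *
              ∑ c ∈ (childrenIn T α).filter (fun c => p ∈ iEnt c),
                (if IsTerminalIn T c then (1:ℝ) else 3 * (mEnt c : ℝ)⁻¹) := by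
              rw [Finset.mul_sum]
          _ ≤ (mWeight α : ℝ)⁻¹ * (mEnt α : ℝ)⁻¹ * 3 := by
              have hnn : (0:ℝ) ≤ (mWeight α : ℝ)⁻¹ * (mEnt α : ℝ)⁻¹ := by positivity
              exact mul_le_mul_of_nonneg_left (children_g_sum_le hml hT hα hterm p) hnn
          _ = (mWeight α : ℝ)⁻¹ * ((mEnt α : ℝ)⁻¹ * 3) := by ring
      refine ⟨?_, fun _ => hstep⟩
      refine le_trans hstep ?_
      have h7 : (7:ℝ) ≤ (mEnt α : ℝ) := by
        exact_mod_cast mEnt_ge_of_nonterminal hml hT hα hterm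
      have hw : (0:ℝ) ≤ (mWeight α : ℝ)⁻¹ := by positivity
      have : (mEnt α : ℝ)⁻¹ * 3 ≤ 1 := by
        rw [inv_mul_le_iff₀ (by linarith)]
        linarith
      calc (mWeight α : ℝ)⁻¹ * ((mEnt α : ℝ)⁻¹ * 3) ≤ (mWeight α : ℝ)⁻¹ * 1 :=
            mul_le_mul_of_nonneg_left this hw
        _ = (mWeight α : ℝ)⁻¹ := mul_one _

lemma mWeight_root (hT : IsAppropriate m n T) : mWeight (rootOf T) = 1 := by
  obtain ⟨hmem, hlen, _⟩ := rootOf_spec hT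
  obtain ⟨t, ht⟩ := List.length_eq_one_iff.1 hlen
  rw [ht]
  show mWeight ([] ++ [t]) = 1
  rw [mWeight_concat]
  rfl

lemma TW_root_le (hml : MLParams m l') (hT : IsAppropriate m n T) (p : ℕ) :
    TW T (rootOf T) p ≤ 1 := by
  have h := (TW_le_aux hml hT (T.sup List.length) (rootOf T) (rootOf_spec hT).1
    (by omega) p).1
  rwa [mWeight_root hT, Nat.cast_one, inv_one] at h

lemma abs_treeMeasure_le (hml : MLParams m l') (hT : IsAppropriate m n T) (p : ℕ) :
    |treeMeasure T p| ≤ 1 := by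
  have happ : treeMeasure T p = ∑ α ∈ T.filter (fun α => IsTerminalIn T α),
      (((mWeight α : ℝ)⁻¹ * ((epsProd α * sEnt α : ℤ) : ℝ)) *
        (Finsupp.single (pOf α) (1:ℝ)) p) := by
    rw [treeMeasure, Finsupp.finset_sum_apply]
    exact Finset.sum_congr rfl (fun α _ => by rw [Finsupp.smul_apply, smul_eq_mul])
  rw [happ]
  have hstep : ∀ α ∈ T.filter (fun α => IsTerminalIn T α),
      |((mWeight α : ℝ)⁻¹ * ((epsProd α * sEnt α : ℤ) : ℝ)) *
        (Finsupp.single (pOf α) (1:ℝ)) p|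
      = (mWeight α : ℝ)⁻¹ * (if pOf α = p then 1 else 0) := by
    intro α hα
    rw [Finset.mem_filter] at hα
    rw [abs_mul, abs_mul, coef_abs hT hα.1, mul_one, abs_of_nonneg
      (by positivity : (0:ℝ) ≤ (mWeight α : ℝ)⁻¹), Finsupp.single_apply]
    congr 1
    split <;> simp
  calc |∑ α ∈ T.filter (fun α => IsTerminalIn T α),
      (((mWeight α : ℝ)⁻¹ * ((epsProd α * sEnt α : ℤ) : ℝ)) *
        (Finsupp.single (pOf α) (1:ℝ)) p)|
      ≤ ∑ α ∈ T.filter (fun α => IsTerminalIn T α),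
        |((mWeight α : ℝ)⁻¹ * ((epsProd α * sEnt α : ℤ) : ℝ)) *
          (Finsupp.single (pOf α) (1:ℝ)) p| := Finset.abs_sum_le_sum_abs _ _
    _ = ∑ α ∈ T.filter (fun α => IsTerminalIn T α),
        (mWeight α : ℝ)⁻¹ * (if pOf α = p then 1 else 0) := Finset.sum_congr rfl hstep
    _ = ∑ α ∈ (T.filter (fun α => IsTerminalIn T α)).filter (fun α => pOf α = p),
        (mWeight α : ℝ)⁻¹ := by
        refine ((Finset.sum_filter _ _).trans ?_).symm
        exact Finset.sum_congr rfl (fun α _ => by split <;> simp)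
    _ = TW T (rootOf T) p := by
        rw [TW]
        congr 1
        ext δ
        simp only [Finset.mem_filter, and_assoc]
        constructor
        · rintro ⟨h1, h2, h3⟩
          exact ⟨h1, h2, root_prefix hT h1, h3⟩
        · rintro ⟨h1, h2, _, h3⟩
          exact ⟨h1, h2, h3⟩
    _ ≤ 1 := TW_root_le hml hT p

lemma abs_mpair_le (hml : MLParams m l') (hT : IsAppropriate m n T) (x : ℕ →₀ ℝ) :
    |mpair (treeMeasure T) x| ≤ ∑ i ∈ x.support, |x i| := by
  rw [mpair_eq_sum_support_right]
  calc |∑ i ∈ x.support, treeMeasure T i * x i|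
      ≤ ∑ i ∈ x.support, |treeMeasure T i * x i| := Finset.abs_sum_le_sum_abs _ _
    _ ≤ ∑ i ∈ x.support, |x i| := by
        refine Finset.sum_le_sum (fun i _ => ?_)
        rw [abs_mul]
        calc |treeMeasure T i| * |x i| ≤ 1 * |x i| :=
              mul_le_mul_of_nonneg_right (abs_treeMeasure_le hml hT i) (abs_nonneg _)
          _ = |x i| := one_mul _

variable {m n l' : ℕ → ℕ} {T : Finset GNode}

/-! ### singleton trees -/

lemma singleton_tree_appropriate (p : ℕ) (s : ℤ) (hs : s = 1 ∨ s = -1) :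
    IsAppropriate m n ({[((0 : ℕ), ({p} : Finset ℕ), s)]} : Finset GNode) := by
  have hterm : IsTerminalIn ({[((0 : ℕ), ({p} : Finset ℕ), s)]} : Finset GNode)
      [((0 : ℕ), ({p} : Finset ℕ), s)] := by
    intro β hβ _
    exact Finset.mem_singleton.1 hβ
  refine ⟨⟨_, Finset.mem_singleton_self _⟩, ?_, ?_, ?_, ?_, ?_, ?_⟩
  · intro α hα
    rw [Finset.mem_singleton.1 hα]
    simp
  · intro α hα k hk hk2
    rw [Finset.mem_singleton.1 hα] at hk2 ⊢
    simp only [List.length_singleton] at hk2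
    have : k = 1 := by omega
    rw [this]
    simp
  · intro α hα β hβ _ _
    rw [Finset.mem_singleton.1 hα, Finset.mem_singleton.1 hβ]
  · intro α hα t ht
    rw [Finset.mem_singleton.1 hα] at ht
    rw [List.mem_singleton.1 ht]
    exact ⟨hs, ⟨p, Finset.mem_singleton_self p⟩⟩
  · intro α hα _
    rw [Finset.mem_singleton.1 hα]
    constructor
    · show mEnt ([] ++ [((0 : ℕ), ({p} : Finset ℕ), s)]) = 0
      rw [mEnt_concat]
    · refine ⟨p, ?_⟩
      show iEnt ([] ++ [((0 : ℕ), ({p} : Finset ℕ), s)]) = {p}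
      rw [iEnt_concat]
  · intro α hα hnt
    rw [Finset.mem_singleton.1 hα] at hnt
    exact absurd hterm hnt

lemma treeMeasure_singleton (p : ℕ) (s : ℤ) :
    treeMeasure ({[((0 : ℕ), ({p} : Finset ℕ), s)]} : Finset GNode)
      = ((s : ℤ) : ℝ) • Finsupp.single p (1 : ℝ) := by
  have hterm : IsTerminalIn ({[((0 : ℕ), ({p} : Finset ℕ), s)]} : Finset GNode)
      [((0 : ℕ), ({p} : Finset ℕ), s)] := by
    intro β hβ _
    exact Finset.mem_singleton.1 hβ
  have hfil : ({[((0 : ℕ), ({p} : Finset ℕ), s)]} : Finset GNode).filter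
      (fun α => IsTerminalIn ({[((0 : ℕ), ({p} : Finset ℕ), s)]} : Finset GNode) α)
      = {[((0 : ℕ), ({p} : Finset ℕ), s)]} := by
    ext α
    simp only [Finset.mem_filter, Finset.mem_singleton]
    exact ⟨fun h => h.1, fun h => ⟨h, h ▸ hterm⟩⟩
  rw [treeMeasure, hfil, Finset.sum_singleton]
  have h1 : mWeight [((0 : ℕ), ({p} : Finset ℕ), s)] = 1 := by
    show mWeight ([] ++ [((0 : ℕ), ({p} : Finset ℕ), s)]) = 1
    rw [mWeight_concat]; rfl
  have h2 : epsProd [((0 : ℕ), ({p} : Finset ℕ), s)] = 1 := by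
    show epsProd ([] ++ [((0 : ℕ), ({p} : Finset ℕ), s)]) = 1
    rw [epsProd_concat]; rfl
  have h3 : sEnt [((0 : ℕ), ({p} : Finset ℕ), s)] = s := by
    show sEnt ([] ++ [((0 : ℕ), ({p} : Finset ℕ), s)]) = s
    rw [sEnt_concat]
  have h4 : pOf [((0 : ℕ), ({p} : Finset ℕ), s)] = p := by
    rw [pOf]
    show minF (iEnt ([] ++ [((0 : ℕ), ({p} : Finset ℕ), s)])) = p
    rw [iEnt_concat, minF_singleton]
  rw [h1, h2, h3, h4]
  norm_num

/-! ### basic properties of `mNorm` -/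

lemma mNorm_set_nonempty (x : ℕ →₀ ℝ) :
    {r : ℝ | ∃ mu ∈ normingSetOf m n, r = mpair mu x}.Nonempty := by
  refine ⟨mpair (treeMeasure ({[((0 : ℕ), ({0} : Finset ℕ), 1)]} : Finset GNode)) x,
    ⟨_, ⟨_, singleton_tree_appropriate 0 1 (Or.inl rfl), rfl⟩, rfl⟩⟩

lemma mNorm_bddAbove (hml : MLParams m l') (x : ℕ →₀ ℝ) :
    BddAbove {r : ℝ | ∃ mu ∈ normingSetOf m n, r = mpair mu x} := by
  refine ⟨∑ i ∈ x.support, |x i|, fun r hr => ?_⟩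
  obtain ⟨mu, ⟨T, hT, rfl⟩, rfl⟩ := hr
  exact le_trans (le_abs_self _) (abs_mpair_le hml hT x)

lemma le_mNorm (hml : MLParams m l') {T : Finset GNode} (hT : IsAppropriate m n T)
    (x : ℕ →₀ ℝ) : mpair (treeMeasure T) x ≤ mNorm m n x :=
  le_csSup (mNorm_bddAbove hml x) ⟨_, ⟨T, hT, rfl⟩, rfl⟩

lemma mNorm_ge_abs (hml : MLParams m l') (x : ℕ →₀ ℝ) (p : ℕ) :
    |x p| ≤ mNorm m n x := by
  rcases le_or_gt 0 (x p) with h | h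
  · have := le_mNorm (n := n) hml (singleton_tree_appropriate p 1 (Or.inl rfl)) x
    rw [treeMeasure_singleton] at this
    rw [abs_of_nonneg h]
    calc x p = mpair (((1 : ℤ) : ℝ) • Finsupp.single p (1:ℝ)) x := by
          rw [mpair_smul_single]; norm_num
      _ ≤ mNorm m n x := by exact_mod_cast this
  · have := le_mNorm (n := n) hml (singleton_tree_appropriate p (-1) (Or.inr rfl)) x
    rw [treeMeasure_singleton] at this
    rw [abs_of_neg h]
    calc -x p = mpair ((((-1) : ℤ) : ℝ) • Finsupp.single p (1:ℝ)) x := by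
          rw [mpair_smul_single]; norm_num
      _ ≤ mNorm m n x := by exact_mod_cast this

lemma mNorm_nonneg (hml : MLParams m l') (x : ℕ →₀ ℝ) : 0 ≤ mNorm m n x :=
  le_trans (abs_nonneg _) (mNorm_ge_abs hml x 0)

lemma mNorm_pos (hml : MLParams m l') {x : ℕ →₀ ℝ} (hx : x.support.Nonempty) :
    0 < mNorm m n x := by
  obtain ⟨p, hp⟩ := hx
  exact lt_of_lt_of_le (abs_pos.2 (Finsupp.mem_support_iff.1 hp)) (mNorm_ge_abs hml x p)

lemma exists_mpair_gt (hml : MLParams m l') (x : ℕ →₀ ℝ) {ε : ℝ} (hε : 0 < ε) :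
    ∃ T : Finset GNode, IsAppropriate m n T ∧
      mNorm m n x - ε < mpair (treeMeasure T) x := by
  have h1 : mNorm m n x - ε < mNorm m n x := sub_lt_self _ hε
  obtain ⟨r, hr, hlt⟩ := exists_lt_of_lt_csSup (mNorm_set_nonempty x) h1
  obtain ⟨mu, ⟨T, hT, rfl⟩, rfl⟩ := hr
  exact ⟨T, hT, hlt⟩

lemma mNorm_zero (hml : MLParams m l') : mNorm m n 0 = 0 := by
  refine le_antisymm ?_ (mNorm_nonneg hml 0)
  refine csSup_le (mNorm_set_nonempty 0) (fun r hr => ?_)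
  obtain ⟨mu, _, rfl⟩ := hr
  rw [mpair_zero_right]

variable {m n l' : ℕ → ℕ} {T : Finset GNode}

lemma node_eq_dropLast_concat {α : GNode} (h : α ≠ []) :
    α = α.dropLast ++ [(mEnt α, iEnt α, sEnt α)] := by
  obtain ⟨L, t, h1, h2, h3, h4, h5⟩ := exists_concat_of_ne_nil h
  have ht : t = (mEnt α, iEnt α, sEnt α) := by
    rw [← h3, ← h4, ← h5]
  rw [← ht, ← h2, ← h1]

/-! ### the sign-flip operation -/

def flipLast (α : GNode) : GNode := α.dropLast ++ [(mEnt α, iEnt α, -sEnt α)]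

def flipTree (T : Finset GNode) : Finset GNode :=
  T.image (fun α => if IsTerminalIn T α then flipLast α else α)

lemma flipLast_length {α : GNode} (h : α ≠ []) : (flipLast α).length = α.length := by
  rw [flipLast, List.length_append, List.length_dropLast, List.length_singleton]
  have := List.length_pos_iff.2 h
  omega

lemma flipLast_mEnt (α : GNode) : mEnt (flipLast α) = mEnt α := by
  rw [flipLast, mEnt_concat]

lemma flipLast_iEnt (α : GNode) : iEnt (flipLast α) = iEnt α := by
  rw [flipLast, iEnt_concat]

lemma flipLast_sEnt (α : GNode) : sEnt (flipLast α) = -sEnt α := by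
  rw [flipLast, sEnt_concat]

lemma flipLast_pOf (α : GNode) : pOf (flipLast α) = pOf α := by
  rw [pOf, pOf, flipLast_iEnt]

lemma flipLast_mWeight (α : GNode) : mWeight (flipLast α) = mWeight α := by
  rw [flipLast, mWeight_concat, mWeight]

lemma flipLast_epsProd (α : GNode) : epsProd (flipLast α) = epsProd α := by
  rw [flipLast, epsProd_concat, epsProd]

lemma flipLast_take {α : GNode} {k : ℕ} (hk : k ≤ α.length - 1) :
    (flipLast α).take k = α.take k := by
  rw [flipLast, List.take_append_of_le_length (by rw [List.length_dropLast]; omega)]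
  rw [List.dropLast_eq_take, List.take_take, min_eq_left hk]

/-- the flip map -/
def flipMap (T : Finset GNode) (α : GNode) : GNode :=
  if IsTerminalIn T α then flipLast α else α

lemma flipTree_eq : flipTree T = T.image (flipMap T) := rfl

lemma flipMap_length (hT : IsAppropriate m n T) {α : GNode} (hα : α ∈ T) :
    (flipMap T α).length = α.length := by
  rw [flipMap]
  split
  · exact flipLast_length (hT.ne_nil α hα)
  · rfl

lemma flipMap_mEnt (α : GNode) : mEnt (flipMap T α) = mEnt α := by
  rw [flipMap]; split; exacts [flipLast_mEnt α, rfl]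

lemma flipMap_iEnt (α : GNode) : iEnt (flipMap T α) = iEnt α := by
  rw [flipMap]; split; exacts [flipLast_iEnt α, rfl]

lemma flipMap_injOn (hml₀ : MLParams m l') (hT : IsAppropriate m n T) :
    ∀ α ∈ T, ∀ β ∈ T, flipMap T α = flipMap T β → α = β := by
  intro α hα β hβ h
  rw [flipMap, flipMap] at h
  by_cases ha : IsTerminalIn T α <;> by_cases hb : IsTerminalIn T β
  · rw [if_pos ha, if_pos hb] at h
    rw [flipLast, flipLast] at h
    obtain ⟨h1, h2⟩ := List.append_inj' h rfl
    have h2' : (mEnt α, iEnt α, -sEnt α) = (mEnt β, iEnt β, -sEnt β) :=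
      List.singleton_injective h2
    simp only [Prod.mk.injEq] at h2'
    obtain ⟨e1, e2, e3⟩ := h2'
    have e3' : sEnt α = sEnt β := by omega
    rw [node_eq_dropLast_concat (hT.ne_nil α hα), node_eq_dropLast_concat (hT.ne_nil β hβ),
      h1, e1, e2, e3']
  · rw [if_pos ha, if_neg hb] at h
    exfalso
    have h0 : mEnt β = 0 := by
      rw [← h, flipLast_mEnt]
      exact (hT.terminal_spec α hα ha).1
    have := mEnt_ge_of_nonterminal hml₀ hT hβ hb
    omega
  · rw [if_neg ha, if_pos hb] at h
    exfalso
    have h0 : mEnt α = 0 := by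
      rw [h, flipLast_mEnt]
      exact (hT.terminal_spec β hβ hb).1
    have := mEnt_ge_of_nonterminal hml₀ hT hα ha
    omega
  · rw [if_neg ha, if_neg hb] at h
    exact h

lemma flipMap_prefix_of (hT : IsAppropriate m n T) {α β : GNode} (hα : α ∈ T) (hβ : β ∈ T)
    (hpre : α <+: β) : flipMap T α <+: flipMap T β := by
  rcases eq_or_ne α β with rfl | hne
  · exact List.prefix_refl _
  have hlt : α.length < β.length := prefix_proper_length hpre hne
  have hant : ¬ IsTerminalIn T α := not_terminal_of_proper hT hβ hpre (Ne.symm hne)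
  rw [flipMap, if_neg hant, flipMap]
  split
  · have h1 : α <+: β.dropLast := by
      refine prefix_of_prefix_length_le hpre (List.dropLast_prefix β) ?_
      rw [List.length_dropLast]; omega
    exact h1.trans (List.prefix_append _ _)
  · exact hpre

lemma flipMap_prefix_rev (hml₀ : MLParams m l') (hT : IsAppropriate m n T) {α β : GNode}
    (hα : α ∈ T) (hβ : β ∈ T) (h : flipMap T α <+: flipMap T β) : α <+: β := by
  rcases eq_or_ne α β with rfl | hne
  · exact List.prefix_refl _
  have hnef : flipMap T α ≠ flipMap T β := by
    intro hc; exact hne (flipMap_injOn hml₀ hT α hα β hβ hc)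
  have hlt : (flipMap T α).length < (flipMap T β).length := prefix_proper_length h hnef
  rw [flipMap_length hT hα, flipMap_length hT hβ] at hlt
  have hstep : flipMap T α <+: β := by
    rcases Classical.em (IsTerminalIn T β) with htb | htb
    · have hfb : flipMap T β = flipLast β := by rw [flipMap, if_pos htb]
      rw [hfb, flipLast] at h
      have hdpre : β.dropLast <+: β.dropLast ++ [(mEnt β, iEnt β, -sEnt β)] :=
        List.prefix_append _ _
      have h1 : flipMap T α <+: β.dropLast := by
        refine prefix_of_prefix_length_le h hdpre ?_
        rw [List.length_dropLast, flipMap_length hT hα]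
        omega
      exact h1.trans (List.dropLast_prefix β)
    · have hfb : flipMap T β = β := by rw [flipMap, if_neg htb]
      rwa [hfb] at h
  by_cases hta : IsTerminalIn T α
  · exfalso
    rw [flipMap, if_pos hta] at hstep
    have hlen : (flipLast α).length = α.length := flipLast_length (hT.ne_nil α hα)
    have hγ : β.take α.length = flipLast α := by
      have := prefix_take_eq hstep
      rwa [hlen] at this
    have hγT : β.take α.length ∈ T := hT.take_mem β hβ _ (hT.len_pos hα) (by omega)
    have hγnt : ¬ IsTerminalIn T (β.take α.length) := by
      refine not_terminal_of_proper hT hβ (List.take_prefix _ _) ?_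
      intro hc
      have := congrArg List.length hc
      rw [List.length_take] at this
      omega
    have h7 := mEnt_ge_of_nonterminal hml₀ hT hγT hγnt
    have h0 : mEnt (β.take α.length) = 0 := by
      rw [hγ, flipLast_mEnt]
      exact (hT.terminal_spec α hα hta).1
    omega
  · rw [flipMap, if_neg hta] at hstep
    exact hstep

lemma mem_flipTree {β' : GNode} : β' ∈ flipTree T ↔ ∃ β ∈ T, flipMap T β = β' := by
  rw [flipTree_eq, Finset.mem_image]

lemma flipMap_mem {β : GNode} (hβ : β ∈ T) : flipMap T β ∈ flipTree T :=
  Finset.mem_image_of_mem _ hβ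

lemma flipMap_terminal (hml₀ : MLParams m l') (hT : IsAppropriate m n T) {α : GNode}
    (hα : α ∈ T) : IsTerminalIn (flipTree T) (flipMap T α) ↔ IsTerminalIn T α := by
  constructor
  · intro ht
    by_contra hnt
    obtain ⟨c, hc⟩ := exists_child hT hα hnt
    obtain ⟨hcT, hclen, hcpre⟩ := mem_childrenIn.1 hc
    have h1 : flipMap T α <+: flipMap T c := flipMap_prefix_of hT hα hcT hcpre
    have h2 := ht (flipMap T c) (flipMap_mem hcT) h1
    have := congrArg List.length h2
    rw [flipMap_length hT hcT, flipMap_length hT hα] at this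
    omega
  · intro ht β' hβ' hpre
    obtain ⟨β, hβ, rfl⟩ := mem_flipTree.1 hβ'
    have h1 : α <+: β := flipMap_prefix_rev hml₀ hT hα hβ hpre
    rw [ht β hβ h1]

lemma flipMap_nonterminal_eq {α : GNode} (hnt : ¬ IsTerminalIn T α) : flipMap T α = α := by
  rw [flipMap, if_neg hnt]

lemma flipTree_children (hml₀ : MLParams m l') (hT : IsAppropriate m n T) {α : GNode}
    (hα : α ∈ T) (hnt : ¬ IsTerminalIn T α) :
    childrenIn (flipTree T) (flipMap T α) = (childrenIn T α).image (flipMap T) := by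
  ext β'
  rw [mem_childrenIn, Finset.mem_image]
  constructor
  · rintro ⟨hβ', hlen, hpre⟩
    obtain ⟨β, hβ, rfl⟩ := mem_flipTree.1 hβ'
    refine ⟨β, mem_childrenIn.2 ⟨hβ, ?_, ?_⟩, rfl⟩
    · rw [← flipMap_length hT hβ, hlen, flipMap_length hT hα]
    · have : flipMap T α <+: flipMap T β := by
        rw [flipMap_nonterminal_eq hnt]
        rwa [flipMap_nonterminal_eq hnt] at hpre
      exact flipMap_prefix_rev hml₀ hT hα hβ this
  · rintro ⟨β, hβ, rfl⟩
    obtain ⟨hβT, hlen, hpre⟩ := mem_childrenIn.1 hβ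
    exact ⟨flipMap_mem hβT, by rw [flipMap_length hT hβT, hlen, flipMap_length hT hα],
      flipMap_prefix_of hT hα hβT hpre⟩

lemma flipTree_appropriate (hml₀ : MLParams m l') (hT : IsAppropriate m n T) :
    IsAppropriate m n (flipTree T) := by
  refine ⟨hT.nonempty'.image _, ?_, ?_, ?_, ?_, ?_, ?_⟩
  · intro α' hα'
    obtain ⟨α, hα, rfl⟩ := mem_flipTree.1 hα'
    have := flipMap_length hT hα
    intro hc
    rw [hc] at this
    exact hT.ne_nil α hα (List.length_eq_zero_iff.1 this.symm)
  · intro α' hα' k hk hk2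
    obtain ⟨α, hα, rfl⟩ := mem_flipTree.1 hα'
    rw [flipMap_length hT hα] at hk2
    rcases eq_or_lt_of_le hk2 with heq | hlt
    · have : (flipMap T α).take k = flipMap T α := by
        rw [← flipMap_length hT hα] at heq
        rw [heq, List.take_length]
      rw [this]
      exact flipMap_mem hα
    · have htake : (flipMap T α).take k = α.take k := by
        rw [flipMap]
        split
        · exact flipLast_take (by omega)
        · rfl
      have hmem : α.take k ∈ T := hT.take_mem α hα k hk (by omega)
      have hnt : ¬ IsTerminalIn T (α.take k) := by
        refine not_terminal_of_proper hT hα (List.take_prefix _ _) ?_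
        intro hc
        have := congrArg List.length hc
        rw [List.length_take] at this
        omega
      rw [htake, ← flipMap_nonterminal_eq hnt]
      exact flipMap_mem hmem
  · intro α' hα' β' hβ' h1 h2
    obtain ⟨α, hα, rfl⟩ := mem_flipTree.1 hα'
    obtain ⟨β, hβ, rfl⟩ := mem_flipTree.1 hβ'
    rw [flipMap_length hT hα] at h1
    rw [flipMap_length hT hβ] at h2
    rw [hT.root_unique α hα β hβ h1 h2]
  · intro α' hα' t ht
    obtain ⟨α, hα, rfl⟩ := mem_flipTree.1 hα'
    rw [flipMap] at ht
    by_cases hterm : IsTerminalIn T α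
    · rw [if_pos hterm, flipLast] at ht
      rcases List.mem_append.1 ht with h | h
      · exact hT.entries α hα t ((List.dropLast_sublist α).subset h)
      · rw [List.mem_singleton.1 h]
        refine ⟨?_, ?_⟩
        · rcases sEnt_pm hT hα with h1 | h1 <;> rw [h1] <;> simp
        · obtain ⟨_, p, hp⟩ := hT.terminal_spec α hα hterm
          show (iEnt α).Nonempty
          rw [hp]
          exact ⟨p, Finset.mem_singleton_self p⟩
    · rw [if_neg hterm] at ht
      exact hT.entries α hα t ht
  · intro α' hα' hterm'
    obtain ⟨α, hα, rfl⟩ := mem_flipTree.1 hα'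
    have hterm : IsTerminalIn T α := (flipMap_terminal hml₀ hT hα).1 hterm'
    obtain ⟨h0, p, hp⟩ := hT.terminal_spec α hα hterm
    exact ⟨by rw [flipMap_mEnt, h0], p, by rw [flipMap_iEnt, hp]⟩
  · intro α' hα' hnt'
    obtain ⟨α, hα, rfl⟩ := mem_flipTree.1 hα'
    have hnt : ¬ IsTerminalIn T α := fun ht => hnt' ((flipMap_terminal hml₀ hT hα).2 ht)
    obtain ⟨j, hj, hadm, hsup⟩ := hT.nonterminal_spec α hα hnt
    refine ⟨j, by rw [flipMap_mEnt, hj], ?_, ?_⟩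
    · have himg : (childrenIn (flipTree T) (flipMap T α)).image iEnt
          = (childrenIn T α).image iEnt := by
        rw [flipTree_children hml₀ hT hα hnt, Finset.image_image]
        exact Finset.image_congr (fun c _ => flipMap_iEnt c)
      rw [himg]
      exact hadm
    · rw [flipTree_children hml₀ hT hα hnt, Finset.sup_image, flipMap_iEnt]
      rw [hsup]
      exact Finset.sup_congr rfl (fun c _ => (flipMap_iEnt c).symm)

lemma treeMeasure_flip (hml₀ : MLParams m l') (hT : IsAppropriate m n T) :
    treeMeasure (flipTree T) = - treeMeasure T := by
  have hfil : (flipTree T).filter (fun α => IsTerminalIn (flipTree T) α)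
      = (T.filter (fun α => IsTerminalIn T α)).image (flipMap T) := by
    ext α'
    rw [Finset.mem_filter, Finset.mem_image]
    constructor
    · rintro ⟨hα', hterm'⟩
      obtain ⟨α, hα, rfl⟩ := mem_flipTree.1 hα'
      exact ⟨α, Finset.mem_filter.2 ⟨hα, (flipMap_terminal hml₀ hT hα).1 hterm'⟩, rfl⟩
    · rintro ⟨α, hα, rfl⟩
      rw [Finset.mem_filter] at hα
      exact ⟨flipMap_mem hα.1, (flipMap_terminal hml₀ hT hα.1).2 hα.2⟩
  rw [treeMeasure, hfil, Finset.sum_image (fun α hα β hβ h =>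
    flipMap_injOn hml₀ hT α (Finset.mem_filter.1 hα).1 β (Finset.mem_filter.1 hβ).1 h)]
  rw [treeMeasure, ← Finset.sum_neg_distrib]
  refine Finset.sum_congr rfl (fun α hα => ?_)
  rw [Finset.mem_filter] at hα
  have hterm := hα.2
  have hflip : flipMap T α = flipLast α := by rw [flipMap, if_pos hterm]
  rw [hflip, flipLast_mWeight, flipLast_epsProd, flipLast_sEnt, flipLast_pOf, ← neg_smul]
  congr 1
  push_cast
  ring

lemma neg_mem_normingSetOf (hml₀ : MLParams m l') {mu : ℕ →₀ ℝ}
    (h : mu ∈ normingSetOf m n) : -mu ∈ normingSetOf m n := by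
  obtain ⟨T, hT, rfl⟩ := h
  exact ⟨flipTree T, flipTree_appropriate hml₀ hT, (treeMeasure_flip hml₀ hT).symm⟩

lemma mpair_neg_left (mu x : ℕ →₀ ℝ) : mpair (-mu) x = - mpair mu x := by
  rw [mpair_eq_sum_support_right, mpair_eq_sum_support_right, ← Finset.sum_neg_distrib]
  exact Finset.sum_congr rfl (fun i _ => by rw [Finsupp.neg_apply]; ring)

lemma mNorm_smul_ge (hml₀ : MLParams m l') (a : ℝ) (x : ℕ →₀ ℝ) :
    |a| * mNorm m n x ≤ mNorm m n (a • x) := by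
  rcases eq_or_ne a 0 with rfl | ha
  · rw [abs_zero, zero_mul, zero_smul]
    exact mNorm_nonneg hml₀ 0
  have hpos : 0 < |a| := abs_pos.2 ha
  have key : ∀ r ∈ {r : ℝ | ∃ mu ∈ normingSetOf m n, r = mpair mu x},
      r ≤ mNorm m n (a • x) / |a| := by
    rintro r ⟨mu, hmu, rfl⟩
    rw [le_div_iff₀ hpos, mul_comm]
    rcases le_or_gt 0 a with h | h
    · rw [abs_of_nonneg h]
      calc a * mpair mu x = mpair mu (a • x) := (mpair_smul_right mu a x).symm
        _ ≤ mNorm m n (a • x) := by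
          obtain ⟨T, hT, rfl⟩ := hmu
          exact le_mNorm hml₀ hT _
    · rw [abs_of_neg h]
      calc -a * mpair mu x = mpair (-mu) (a • x) := by
            rw [mpair_neg_left, mpair_smul_right]; ring
        _ ≤ mNorm m n (a • x) := by
          obtain ⟨T', hT', heq⟩ := neg_mem_normingSetOf hml₀ hmu
          rw [heq]
          exact le_mNorm hml₀ hT' _
  have h1 : mNorm m n x ≤ mNorm m n (a • x) / |a| :=
    csSup_le (mNorm_set_nonempty x) key
  calc |a| * mNorm m n x ≤ |a| * (mNorm m n (a • x) / |a|) :=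
        mul_le_mul_of_nonneg_left h1 (le_of_lt hpos)
    _ = mNorm m n (a • x) := by field_simp

variable {m n l' : ℕ → ℕ} {T : Finset GNode} {E : Finset ℕ}

/-! ### formula for `mpair` against a tree measure -/

lemma mpair_treeMeasure (T : Finset GNode) (x : ℕ →₀ ℝ) :
    mpair (treeMeasure T) x = ∑ α ∈ T.filter (fun α => IsTerminalIn T α),
      ((mWeight α : ℝ)⁻¹ * ((epsProd α * sEnt α : ℤ) : ℝ)) * x (pOf α) := by
  rw [treeMeasure, mpair_sum_left]
  exact Finset.sum_congr rfl (fun α _ => mpair_smul_single _ _ _)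

/-! ### the restriction operation -/

def resMap (E : Finset ℕ) (α : GNode) : GNode := α.map (fun t => (t.1, t.2.1 ∩ E, t.2.2))

def restrictTree (E : Finset ℕ) (T : Finset GNode) : Finset GNode :=
  (T.filter (fun α => (iEnt α ∩ E).Nonempty)).image (resMap E)

lemma resMap_length (α : GNode) : (resMap E α).length = α.length := List.length_map _

lemma resMap_concat (l : GNode) (t : ℕ × Finset ℕ × ℤ) :
    resMap E (l ++ [t]) = resMap E l ++ [(t.1, t.2.1 ∩ E, t.2.2)] := by
  rw [resMap, List.map_append]
  rfl

lemma resMap_eq_concat {α : GNode} (h : α ≠ []) :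
    resMap E α = resMap E α.dropLast ++ [(mEnt α, iEnt α ∩ E, sEnt α)] := by
  conv_lhs => rw [node_eq_dropLast_concat h]
  rw [resMap_concat]

lemma resMap_mEnt {α : GNode} (h : α ≠ []) : mEnt (resMap E α) = mEnt α := by
  rw [resMap_eq_concat h, mEnt_concat]

lemma resMap_iEnt {α : GNode} (h : α ≠ []) : iEnt (resMap E α) = iEnt α ∩ E := by
  rw [resMap_eq_concat h, iEnt_concat]

lemma resMap_sEnt {α : GNode} (h : α ≠ []) : sEnt (resMap E α) = sEnt α := by
  rw [resMap_eq_concat h, sEnt_concat]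

lemma resMap_dropLast (α : GNode) : (resMap E α).dropLast = resMap E α.dropLast := by
  rw [resMap, resMap, List.map_dropLast]

lemma resMap_mWeight (α : GNode) : mWeight (resMap E α) = mWeight α := by
  rw [mWeight, mWeight, resMap_dropLast, resMap, List.map_map]
  rfl

lemma resMap_epsProd (α : GNode) : epsProd (resMap E α) = epsProd α := by
  rw [epsProd, epsProd, resMap_dropLast, resMap, List.map_map]
  rfl

lemma resMap_take (α : GNode) (k : ℕ) : (resMap E α).take k = resMap E (α.take k) := by
  rw [resMap, resMap, List.map_take]

lemma resMap_prefix {α β : GNode} (h : α <+: β) : resMap E α <+: resMap E β :=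
  List.IsPrefix.map _ h

lemma resMap_ne_nil {α : GNode} (h : α ≠ []) : resMap E α ≠ [] := by
  intro hc
  have := congrArg List.length hc
  rw [resMap_length] at this
  exact h (List.length_eq_zero_iff.1 this)

/-- survivors: nodes whose interval meets `E` -/
lemma surv_take (hT : IsAppropriate m n T) {α : GNode} (hα : α ∈ T)
    (hs : (iEnt α ∩ E).Nonempty) {k : ℕ} (hk : 0 < k) (hk2 : k ≤ α.length) :
    (iEnt (α.take k) ∩ E).Nonempty := by
  obtain ⟨q, hq⟩ := hs
  rw [Finset.mem_inter] at hq
  have hsub : iEnt α ⊆ iEnt (α.take k) :=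
    iEnt_subset hT hα (hT.take_mem α hα k hk hk2) (List.take_prefix k α)
  exact ⟨q, Finset.mem_inter.2 ⟨hsub hq.1, hq.2⟩⟩

lemma mem_restrictTree {α' : GNode} :
    α' ∈ restrictTree E T ↔ ∃ α, (α ∈ T ∧ (iEnt α ∩ E).Nonempty) ∧ resMap E α = α' := by
  rw [restrictTree, Finset.mem_image]
  constructor
  · rintro ⟨α, hα, rfl⟩
    rw [Finset.mem_filter] at hα
    exact ⟨α, hα, rfl⟩
  · rintro ⟨α, hα, rfl⟩
    exact ⟨α, Finset.mem_filter.2 hα, rfl⟩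

lemma resMap_injOn (hT : IsAppropriate m n T) :
    ∀ (N : ℕ) (α β : GNode), α.length ≤ N →
      α ∈ T → (iEnt α ∩ E).Nonempty → β ∈ T → (iEnt β ∩ E).Nonempty →
      resMap E α = resMap E β → α = β := by
  intro N
  induction N with
  | zero =>
    intro α β hlen hα _ _ _ _
    exact absurd (List.length_eq_zero_iff.1 (Nat.le_zero.1 hlen)) (hT.ne_nil α hα)
  | succ N ih =>
    intro α β hlen hα hαs hβ hβs heq
    have hlen2 : α.length = β.length := by
      have := congrArg List.length heq
      rwa [resMap_length, resMap_length] at this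
    rcases eq_or_lt_of_le (Nat.succ_le_of_lt (hT.len_pos hα)) with h1 | h1
    · exact hT.root_unique α hα β hβ h1.symm (by omega)
    -- both have length ≥ 2
    have hα2 : 2 ≤ α.length := h1
    have hdropα : α.dropLast ∈ T := by
      rw [List.dropLast_eq_take]
      exact hT.take_mem α hα _ (by omega) (by omega)
    have hdropβ : β.dropLast ∈ T := by
      rw [List.dropLast_eq_take]
      exact hT.take_mem β hβ _ (by omega) (by omega)
    have hdropαs : (iEnt α.dropLast ∩ E).Nonempty := by
      rw [List.dropLast_eq_take]
      exact surv_take hT hα hαs (by omega) (by omega)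
    have hdropβs : (iEnt β.dropLast ∩ E).Nonempty := by
      rw [List.dropLast_eq_take]
      exact surv_take hT hβ hβs (by omega) (by omega)
    have heq' : resMap E α.dropLast ++ [(mEnt α, iEnt α ∩ E, sEnt α)]
        = resMap E β.dropLast ++ [(mEnt β, iEnt β ∩ E, sEnt β)] := by
      rw [← resMap_eq_concat (hT.ne_nil α hα), ← resMap_eq_concat (hT.ne_nil β hβ), heq]
    obtain ⟨hpre, hlast⟩ := List.append_inj' heq' rfl
    have hdropeq : α.dropLast = β.dropLast := by
      refine ih _ _ ?_ hdropα hdropαs hdropβ hdropβs hpre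
      rw [List.length_dropLast]; omega
    have hent := List.singleton_injective hlast
    simp only [Prod.mk.injEq] at hent
    obtain ⟨e1, e2, e3⟩ := hent
    -- α and β are children of the common parent with intersecting intervals
    have hpar := parent_spec hT hα hα2
    have hpar' := parent_spec hT hβ (by omega)
    rw [← List.dropLast_eq_take] at hpar hpar'
    rw [hdropeq] at hpar
    have hnt : ¬ IsTerminalIn T β.dropLast := by
      refine not_terminal_of_proper hT hβ (List.dropLast_prefix β) ?_
      intro hc
      have := congrArg List.length hc
      rw [List.length_dropLast] at this
      omega
    obtain ⟨q, hq⟩ := hαs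
    rw [Finset.mem_inter] at hq
    have hq' : q ∈ iEnt β := by
      have : q ∈ iEnt α ∩ E := Finset.mem_inter.2 hq
      rw [e2] at this
      exact (Finset.mem_inter.1 this).1
    have hIeq : iEnt α = iEnt β :=
      children_iEnt_eq hT hpar'.1 hnt hpar.2 hpar'.2 hq.1 hq'
    rw [node_eq_dropLast_concat (hT.ne_nil α hα), node_eq_dropLast_concat (hT.ne_nil β hβ),
      hdropeq, e1, e3, hIeq]

lemma res_prefix_rev (hT : IsAppropriate m n T) {α β : GNode} (hα : α ∈ T)
    (hαs : (iEnt α ∩ E).Nonempty) (hβ : β ∈ T) (hβs : (iEnt β ∩ E).Nonempty)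
    (h : resMap E α <+: resMap E β) : α <+: β := by
  have hlen : α.length ≤ β.length := by
    have := h.length_le
    rwa [resMap_length, resMap_length] at this
  have htake : β.take α.length ∈ T := hT.take_mem β hβ _ (hT.len_pos hα) hlen
  have htakes : (iEnt (β.take α.length) ∩ E).Nonempty :=
    surv_take hT hβ hβs (hT.len_pos hα) hlen
  have heq : resMap E (β.take α.length) = resMap E α := by
    rw [← resMap_take]
    have := prefix_take_eq h
    rwa [resMap_length] at this
  have := resMap_injOn hT (β.take α.length).length _ _ le_rfl htake htakes hα hαs heq
  rw [← this]
  exact List.take_prefix _ _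

lemma res_terminal (hT : IsAppropriate m n T) {α : GNode} (hα : α ∈ T)
    (hαs : (iEnt α ∩ E).Nonempty) :
    IsTerminalIn (restrictTree E T) (resMap E α) ↔ IsTerminalIn T α := by
  constructor
  · intro ht
    by_contra hnt
    obtain ⟨q, hq⟩ := hαs
    rw [Finset.mem_inter] at hq
    obtain ⟨c, hc, hqc⟩ := exists_child_mem hT hα hnt hq.1
    obtain ⟨hcT, hclen, hcpre⟩ := mem_childrenIn.1 hc
    have hcs : (iEnt c ∩ E).Nonempty := ⟨q, Finset.mem_inter.2 ⟨hqc, hq.2⟩⟩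
    have h1 : resMap E c ∈ restrictTree E T := mem_restrictTree.2 ⟨c, ⟨hcT, hcs⟩, rfl⟩
    have h2 := ht (resMap E c) h1 (resMap_prefix hcpre)
    have := congrArg List.length h2
    rw [resMap_length, resMap_length] at this
    omega
  · intro ht β' hβ' hpre
    obtain ⟨β, ⟨hβ, hβs⟩, rfl⟩ := mem_restrictTree.1 hβ'
    rw [ht β hβ (res_prefix_rev hT hα hαs hβ hβs hpre)]

lemma res_children (hT : IsAppropriate m n T) {α : GNode} (hα : α ∈ T)
    (hαs : (iEnt α ∩ E).Nonempty) :
    childrenIn (restrictTree E T) (resMap E α)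
      = ((childrenIn T α).filter (fun c => (iEnt c ∩ E).Nonempty)).image (resMap E) := by
  ext β'
  rw [mem_childrenIn, Finset.mem_image]
  constructor
  · rintro ⟨hβ', hlen, hpre⟩
    obtain ⟨β, ⟨hβ, hβs⟩, rfl⟩ := mem_restrictTree.1 hβ'
    refine ⟨β, Finset.mem_filter.2 ⟨mem_childrenIn.2 ⟨hβ, ?_, ?_⟩, hβs⟩, rfl⟩
    · rw [← resMap_length (E := E) β, hlen, resMap_length]
    · exact res_prefix_rev hT hα hαs hβ hβs hpre
  · rintro ⟨β, hβ, rfl⟩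
    rw [Finset.mem_filter] at hβ
    obtain ⟨hc, hβs⟩ := hβ
    obtain ⟨hβT, hlen, hpre⟩ := mem_childrenIn.1 hc
    exact ⟨mem_restrictTree.2 ⟨β, ⟨hβT, hβs⟩, rfl⟩,
      by rw [resMap_length, resMap_length, hlen], resMap_prefix hpre⟩

lemma entry_inter_nonempty (hT : IsAppropriate m n T) {α : GNode} (hα : α ∈ T)
    (hs : (iEnt α ∩ E).Nonempty) : ∀ t ∈ α, (t.2.1 ∩ E).Nonempty := by
  intro t ht
  obtain ⟨i, hi, hget⟩ := List.mem_iff_getElem.1 ht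
  have hγT : α.take (i + 1) ∈ T := hT.take_mem α hα _ (Nat.succ_pos _) (by omega)
  have hγc : α.take (i + 1) = α.take i ++ [α[i]] := by
    rw [List.take_succ, List.getElem?_eq_getElem hi]
    rfl
  have hiEnt : iEnt (α.take (i + 1)) = α[i].2.1 := by rw [hγc, iEnt_concat]
  have hsub : iEnt α ⊆ iEnt (α.take (i + 1)) :=
    iEnt_subset hT hα hγT (List.take_prefix _ _)
  obtain ⟨q, hq⟩ := hs
  rw [Finset.mem_inter] at hq
  rw [← hget]
  exact ⟨q, Finset.mem_inter.2 ⟨by rw [← hiEnt]; exact hsub hq.1, hq.2⟩⟩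

lemma restrictTree_appropriate (hml₀ : MLParams m l') (hT : IsAppropriate m n T)
    (hne : ∃ α ∈ T, (iEnt α ∩ E).Nonempty) : IsAppropriate m n (restrictTree E T) := by
  obtain ⟨α₀, hα₀, hα₀s⟩ := hne
  refine ⟨⟨resMap E α₀, mem_restrictTree.2 ⟨α₀, ⟨hα₀, hα₀s⟩, rfl⟩⟩, ?_, ?_, ?_, ?_, ?_, ?_⟩
  · rintro α' hα'
    obtain ⟨α, ⟨hα, _⟩, rfl⟩ := mem_restrictTree.1 hα'
    exact resMap_ne_nil (hT.ne_nil α hα)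
  · intro α' hα' k hk hk2
    obtain ⟨α, ⟨hα, hαs⟩, rfl⟩ := mem_restrictTree.1 hα'
    rw [resMap_length] at hk2
    rw [resMap_take]
    exact mem_restrictTree.2 ⟨α.take k, ⟨hT.take_mem α hα k hk hk2,
      surv_take hT hα hαs hk hk2⟩, rfl⟩
  · intro α' hα' β' hβ' h1 h2
    obtain ⟨α, ⟨hα, hαs⟩, rfl⟩ := mem_restrictTree.1 hα'
    obtain ⟨β, ⟨hβ, hβs⟩, rfl⟩ := mem_restrictTree.1 hβ'
    rw [resMap_length] at h1 h2
    rw [hT.root_unique α hα β hβ h1 h2]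
  · intro α' hα' t' ht'
    obtain ⟨α, ⟨hα, hαs⟩, rfl⟩ := mem_restrictTree.1 hα'
    rw [resMap] at ht'
    obtain ⟨t, ht, rfl⟩ := List.mem_map.1 ht'
    exact ⟨(hT.entries α hα t ht).1, entry_inter_nonempty hT hα hαs t ht⟩
  · intro α' hα' hterm'
    obtain ⟨α, ⟨hα, hαs⟩, rfl⟩ := mem_restrictTree.1 hα'
    have hterm : IsTerminalIn T α := (res_terminal hT hα hαs).1 hterm'
    obtain ⟨h0, p, hp⟩ := hT.terminal_spec α hα hterm
    refine ⟨by rw [resMap_mEnt (hT.ne_nil α hα), h0], p, ?_⟩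
    rw [resMap_iEnt (hT.ne_nil α hα), hp]
    refine Finset.Subset.antisymm Finset.inter_subset_left ?_
    obtain ⟨q, hq⟩ := hαs
    rw [hp] at hq
    rw [Finset.mem_inter, Finset.mem_singleton] at hq
    intro r hr
    rw [Finset.mem_singleton] at hr
    rw [hr, ← hq.1]
    exact Finset.mem_inter.2 ⟨by rw [hq.1]; exact Finset.mem_singleton_self p, hq.2⟩
  · intro α' hα' hnt'
    obtain ⟨α, ⟨hα, hαs⟩, rfl⟩ := mem_restrictTree.1 hα'
    have hnt : ¬ IsTerminalIn T α := fun ht => hnt' ((res_terminal hT hα hαs).2 ht)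
    obtain ⟨j, hj, hadm, hsup⟩ := hT.nonterminal_spec α hα hnt
    refine ⟨j, by rw [resMap_mEnt (hT.ne_nil α hα), hj], ?_, ?_⟩
    · -- FamAdmissible for the restricted children
      rw [res_children hT hα hαs]
      set CHs := (childrenIn T α).filter (fun c => (iEnt c ∩ E).Nonempty) with hCHs
      have hCHsmem : ∀ c ∈ CHs, c ∈ childrenIn T α ∧ (iEnt c ∩ E).Nonempty := by
        intro c hc; rw [hCHs, Finset.mem_filter] at hc; exact hc
      have himg : (CHs.image (resMap E)).image iEnt = CHs.image (fun c => iEnt c ∩ E) := by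
        rw [Finset.image_image]
        refine Finset.image_congr (fun c hc => ?_)
        have hcT : c ∈ T := (mem_childrenIn.1 (hCHsmem c hc).1).1
        exact resMap_iEnt (hT.ne_nil c hcT)
      rw [himg]
      refine ⟨?_, ?_, ?_⟩
      · rintro I hI
        obtain ⟨c, hc, rfl⟩ := Finset.mem_image.1 hI
        exact (hCHsmem c hc).2
      · rintro I hI J hJ hne
        obtain ⟨c, hc, rfl⟩ := Finset.mem_image.1 hI
        obtain ⟨c', hc', rfl⟩ := Finset.mem_image.1 hJ
        have hIne : iEnt c ≠ iEnt c' := fun h => hne (by rw [h])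
        rcases hadm.2.1 (iEnt c) (Finset.mem_image_of_mem _ (hCHsmem c hc).1) (iEnt c')
            (Finset.mem_image_of_mem _ (hCHsmem c' hc').1) hIne with h | h
        · exact Or.inl (fun q hq r hr =>
            h q (Finset.mem_inter.1 hq).1 r (Finset.mem_inter.1 hr).1)
        · exact Or.inr (fun q hq r hr =>
            h q (Finset.mem_inter.1 hq).1 r (Finset.mem_inter.1 hr).1)
      · -- Schreier condition via embedding
        set G := (CHs.image (fun c => iEnt c ∩ E)).image minF with hG
        set F := ((childrenIn T α).image iEnt).image minF with hF
        set ψ : ℕ → ℕ := fun q =>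
          if h : ∃ c ∈ CHs, minF (iEnt c ∩ E) = q then minF (iEnt h.choose) else q with hψ
        have hGwit : ∀ q ∈ G, ∃ c ∈ CHs, minF (iEnt c ∩ E) = q := by
          intro q hq
          rw [hG, Finset.mem_image] at hq
          obtain ⟨I, hI, rfl⟩ := hq
          obtain ⟨c, hc, rfl⟩ := Finset.mem_image.1 hI
          exact ⟨c, hc, rfl⟩
        have hq_mem : ∀ c ∈ CHs, minF (iEnt c ∩ E) ∈ iEnt c ∧ minF (iEnt c ∩ E) ∈ E := by
          intro c hc
          have := minF_mem (hCHsmem c hc).2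
          rw [Finset.mem_inter] at this
          exact this
        have hcne : ∀ c ∈ CHs, (iEnt c).Nonempty := by
          intro c hc
          exact hadm.1 _ (Finset.mem_image_of_mem _ (hCHsmem c hc).1)
        have hψspec : ∀ q ∈ G, ∃ c ∈ CHs, minF (iEnt c ∩ E) = q ∧ ψ q = minF (iEnt c) := by
          intro q hq
          have h := hGwit q hq
          rw [hψ]
          simp only [dif_pos h]
          exact ⟨h.choose, h.choose_spec.1, h.choose_spec.2, rfl⟩
        refine schreier_embed _ F G ψ ?_ ?_ ?_ hadm.2.2
        · intro a ha b hb hab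
          obtain ⟨c, hc, hca, hψa⟩ := hψspec a ha
          obtain ⟨c', hc', hcb, hψb⟩ := hψspec b hb
          rw [hψa, hψb]
          have hIne : iEnt c ≠ iEnt c' := by
            intro h
            rw [← hca, ← hcb, h] at hab
            exact lt_irrefl _ hab
          rcases hadm.2.1 (iEnt c) (Finset.mem_image_of_mem _ (hCHsmem c hc).1) (iEnt c')
              (Finset.mem_image_of_mem _ (hCHsmem c' hc').1) hIne with h | h
          · exact h _ (minF_mem (hcne c hc)) _ (minF_mem (hcne c' hc'))
          · exfalso
            have := h _ ((hq_mem c' hc').1) _ ((hq_mem c hc).1)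
            rw [hca, hcb] at this
            omega
        · intro a ha
          obtain ⟨c, hc, _, hψa⟩ := hψspec a ha
          rw [hψa, hF]
          exact Finset.mem_image_of_mem _ (Finset.mem_image_of_mem _ (hCHsmem c hc).1)
        · intro a ha
          obtain ⟨c, hc, hca, hψa⟩ := hψspec a ha
          rw [hψa, ← hca]
          exact minF_le (hq_mem c hc).1
    · -- sup condition
      rw [res_children hT hα hαs, Finset.sup_image, resMap_iEnt (hT.ne_nil α hα)]
      ext q
      rw [Finset.mem_inter, Finset.mem_sup]
      constructor
      · rintro ⟨hq1, hq2⟩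
        rw [hsup, Finset.mem_sup] at hq1
        obtain ⟨c, hc, hqc⟩ := hq1
        refine ⟨c, Finset.mem_filter.2 ⟨hc, ⟨q, Finset.mem_inter.2 ⟨hqc, hq2⟩⟩⟩, ?_⟩
        show q ∈ iEnt (resMap E c)
        rw [resMap_iEnt (hT.ne_nil c (mem_childrenIn.1 hc).1)]
        exact Finset.mem_inter.2 ⟨hqc, hq2⟩
      · rintro ⟨c, hc, hq⟩
        rw [Finset.mem_filter] at hc
        have hcT : c ∈ T := (mem_childrenIn.1 hc.1).1
        have : q ∈ iEnt c ∩ E := by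
          rw [← resMap_iEnt (hT.ne_nil c hcT)]
          exact hq
        rw [Finset.mem_inter] at this
        refine ⟨?_, this.2⟩
        rw [hsup, Finset.mem_sup]
        exact ⟨c, hc.1, this.1⟩

lemma terminal_surv_iff (hT : IsAppropriate m n T) {α : GNode} (hα : α ∈ T)
    (hterm : IsTerminalIn T α) : (iEnt α ∩ E).Nonempty ↔ pOf α ∈ E := by
  rw [terminal_iEnt hT hα hterm]
  constructor
  · rintro ⟨q, hq⟩
    rw [Finset.mem_inter, Finset.mem_singleton] at hq
    rw [← hq.1]
    exact hq.2
  · intro h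
    exact ⟨pOf α, Finset.mem_inter.2 ⟨Finset.mem_singleton_self _, h⟩⟩

lemma pOf_resMap (hT : IsAppropriate m n T) {α : GNode} (hα : α ∈ T)
    (hterm : IsTerminalIn T α) (hp : pOf α ∈ E) : pOf (resMap E α) = pOf α := by
  rw [pOf, resMap_iEnt (hT.ne_nil α hα), terminal_iEnt hT hα hterm,
    Finset.inter_eq_left.2 (Finset.singleton_subset_iff.2 hp), minF_singleton]

lemma res_filter_terminal (hT : IsAppropriate m n T) :
    (restrictTree E T).filter (fun α' => IsTerminalIn (restrictTree E T) α')
      = ((T.filter (fun α => IsTerminalIn T α)).filter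
          (fun α => pOf α ∈ E)).image (resMap E) := by
  ext α'
  rw [Finset.mem_filter, Finset.mem_image]
  constructor
  · rintro ⟨hα', hterm'⟩
    obtain ⟨α, ⟨hα, hαs⟩, rfl⟩ := mem_restrictTree.1 hα'
    have hterm : IsTerminalIn T α := (res_terminal hT hα hαs).1 hterm'
    exact ⟨α, Finset.mem_filter.2 ⟨Finset.mem_filter.2 ⟨hα, hterm⟩,
      (terminal_surv_iff hT hα hterm).1 hαs⟩, rfl⟩
  · rintro ⟨α, hα, rfl⟩
    rw [Finset.mem_filter, Finset.mem_filter] at hα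
    obtain ⟨⟨hαT, hterm⟩, hp⟩ := hα
    have hαs : (iEnt α ∩ E).Nonempty := (terminal_surv_iff hT hαT hterm).2 hp
    exact ⟨mem_restrictTree.2 ⟨α, ⟨hαT, hαs⟩, rfl⟩, (res_terminal hT hαT hαs).2 hterm⟩

lemma mpair_restrict_formula (hT : IsAppropriate m n T) (x : ℕ →₀ ℝ) :
    mpair (treeMeasure (restrictTree E T)) x
      = ∑ α ∈ (T.filter (fun α => IsTerminalIn T α)).filter (fun α => pOf α ∈ E),
          ((mWeight α : ℝ)⁻¹ * ((epsProd α * sEnt α : ℤ) : ℝ)) * x (pOf α) := by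
  rw [mpair_treeMeasure, res_filter_terminal hT]
  rw [Finset.sum_image ?hinj]
  case hinj =>
    intro α hα β hβ h
    rw [Finset.mem_coe, Finset.mem_filter, Finset.mem_filter] at hα hβ
    refine resMap_injOn hT α.length α β le_rfl hα.1.1 ?_ hβ.1.1 ?_ h
    · exact (terminal_surv_iff hT hα.1.1 hα.1.2).2 hα.2
    · exact (terminal_surv_iff hT hβ.1.1 hβ.1.2).2 hβ.2
  refine Finset.sum_congr rfl (fun α hα => ?_)
  rw [Finset.mem_filter, Finset.mem_filter] at hα
  obtain ⟨⟨hαT, hterm⟩, hp⟩ := hα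
  rw [resMap_mWeight, resMap_epsProd, resMap_sEnt (hT.ne_nil α hαT),
    pOf_resMap hT hαT hterm hp]

lemma mpair_restrict_eq (hT : IsAppropriate m n T) {x : ℕ →₀ ℝ}
    (hsupp : ∀ i ∈ x.support, i ∈ E) :
    mpair (treeMeasure (restrictTree E T)) x = mpair (treeMeasure T) x := by
  rw [mpair_restrict_formula hT, mpair_treeMeasure]
  refine Finset.sum_subset (Finset.filter_subset _ _) (fun α hα hnα => ?_)
  have hp : pOf α ∉ E := by
    intro hc
    exact hnα (Finset.mem_filter.2 ⟨hα, hc⟩)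
  have hx : x (pOf α) = 0 := by
    by_contra hc
    exact hp (hsupp _ (Finsupp.mem_support_iff.2 hc))
  rw [hx, mul_zero]

lemma mpair_restrict_disjoint (hT : IsAppropriate m n T) {x : ℕ →₀ ℝ}
    (hsupp : ∀ i ∈ x.support, i ∉ E) :
    mpair (treeMeasure (restrictTree E T)) x = 0 := by
  rw [mpair_restrict_formula hT]
  refine Finset.sum_eq_zero (fun α hα => ?_)
  rw [Finset.mem_filter] at hα
  have hx : x (pOf α) = 0 := by
    by_contra hc
    exact hsupp _ (Finsupp.mem_support_iff.2 hc) hα.2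
  rw [hx, mul_zero]

lemma res_iEnt_subset_E {α' : GNode} (hT : IsAppropriate m n T)
    (hα' : α' ∈ restrictTree E T) : iEnt α' ⊆ E := by
  obtain ⟨α, ⟨hα, _⟩, rfl⟩ := mem_restrictTree.1 hα'
  rw [resMap_iEnt (hT.ne_nil α hα)]
  exact Finset.inter_subset_right

variable {m n l' : ℕ → ℕ}

lemma iEnt_nonempty {T : Finset GNode} (hT : IsAppropriate m n T) {α : GNode} (hα : α ∈ T) :
    (iEnt α).Nonempty := by
  obtain ⟨L, t, h1, _, _, h4, _⟩ := exists_concat_of_ne_nil (hT.ne_nil α hα)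
  have ht : t ∈ α := by rw [h1]; exact List.mem_append_right _ (List.mem_singleton_self t)
  rw [← h4]
  exact (hT.entries α hα t ht).2

/-! ### cons-node entry lemmas -/

lemma cons_eq_concat {α : GNode} (h : α ≠ []) (r0 : ℕ × Finset ℕ × ℤ) :
    r0 :: α = (r0 :: α.dropLast) ++ [(mEnt α, iEnt α, sEnt α)] := by
  conv_lhs => rw [node_eq_dropLast_concat h]
  rfl

lemma cons_mEnt {α : GNode} (h : α ≠ []) (r0 : ℕ × Finset ℕ × ℤ) :
    mEnt (r0 :: α) = mEnt α := by
  rw [cons_eq_concat h r0, mEnt_concat]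

lemma cons_iEnt {α : GNode} (h : α ≠ []) (r0 : ℕ × Finset ℕ × ℤ) :
    iEnt (r0 :: α) = iEnt α := by
  rw [cons_eq_concat h r0, iEnt_concat]

lemma cons_sEnt {α : GNode} (h : α ≠ []) (r0 : ℕ × Finset ℕ × ℤ) :
    sEnt (r0 :: α) = sEnt α := by
  rw [cons_eq_concat h r0, sEnt_concat]

lemma cons_pOf {α : GNode} (h : α ≠ []) (r0 : ℕ × Finset ℕ × ℤ) :
    pOf (r0 :: α) = pOf α := by
  rw [pOf, pOf, cons_iEnt h r0]

lemma cons_dropLast {α : GNode} (h : α ≠ []) (r0 : ℕ × Finset ℕ × ℤ) :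
    (r0 :: α).dropLast = r0 :: α.dropLast := by
  conv_lhs => rw [cons_eq_concat h r0]
  rw [List.dropLast_concat]

lemma cons_mWeight {α : GNode} (h : α ≠ []) (r0 : ℕ × Finset ℕ × ℤ) :
    mWeight (r0 :: α) = r0.1 * mWeight α := by
  rw [mWeight, mWeight, cons_dropLast h r0, List.map_cons, List.prod_cons]

lemma cons_epsProd {α : GNode} (h : α ≠ []) (r0 : ℕ × Finset ℕ × ℤ) :
    epsProd (r0 :: α) = r0.2.2 * epsProd α := by
  rw [epsProd, epsProd, cons_dropLast h r0, List.map_cons, List.prod_cons]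

/-! ### the combination tree -/

def combTree (r0 : ℕ × Finset ℕ × ℤ) (k : ℕ) (Ts : ℕ → Finset GNode) : Finset GNode :=
  insert [r0] ((Finset.range k).biUnion fun i => (Ts i).image (fun α => r0 :: α))

lemma mem_combTree {r0 : ℕ × Finset ℕ × ℤ} {k : ℕ} {Ts : ℕ → Finset GNode} {β : GNode} :
    β ∈ combTree r0 k Ts ↔ β = [r0] ∨ ∃ i, i < k ∧ ∃ α ∈ Ts i, β = r0 :: α := by
  rw [combTree, Finset.mem_insert, Finset.mem_biUnion]
  constructor
  · rintro (h | ⟨i, hi, h⟩)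
    · exact Or.inl h
    · obtain ⟨α, hα, rfl⟩ := Finset.mem_image.1 h
      exact Or.inr ⟨i, Finset.mem_range.1 hi, α, hα, rfl⟩
  · rintro (h | ⟨i, hi, α, hα, rfl⟩)
    · exact Or.inl h
    · exact Or.inr ⟨i, Finset.mem_range.2 hi, Finset.mem_image_of_mem _ hα⟩

section Comb

variable {k : ℕ} {Ts : ℕ → Finset GNode} {r0 : ℕ × Finset ℕ × ℤ}
variable (hk : 0 < k) (hTs : ∀ i, i < k → IsAppropriate m n (Ts i))
variable (hord : ∀ i i', i < i' → i' < k → FinLt (iEnt (rootOf (Ts i))) (iEnt (rootOf (Ts i'))))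

include hTs hord in
lemma comb_tree_disjoint : ∀ i i', i < k → i' < k → i ≠ i' →
    ∀ α, α ∈ Ts i → α ∈ Ts i' → False := by
  have key : ∀ i i', i < i' → i' < k → ∀ α, α ∈ Ts i → α ∈ Ts i' → False := by
    intro i i' hii hi' α hα hα'
    have hi : i < k := lt_trans hii hi'
    have h1 : α.take 1 = rootOf (Ts i) := (rootOf_spec (hTs i hi)).2.2 α hα
    have h2 : α.take 1 = rootOf (Ts i') := (rootOf_spec (hTs i' hi')).2.2 α hα'
    have heq : rootOf (Ts i) = rootOf (Ts i') := by rw [← h1, ← h2]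
    obtain ⟨q, hq⟩ := iEnt_nonempty (hTs i hi) (rootOf_spec (hTs i hi)).1
    have := hord i i' hii hi' q hq q (by rw [← heq]; exact hq)
    omega
  intro i i' hi hi' hne α hα hα'
  rcases lt_or_gt_of_ne hne with h | h
  · exact key i i' h hi' α hα hα'
  · exact key i' i h hi α hα' hα

include hk hTs hord in
lemma comb_cons_prefix_cases {i : ℕ} (hi : i < k) {α : GNode} (hα : α ∈ Ts i) {β' : GNode}
    (hβ' : β' ∈ combTree r0 k Ts) (hpre : r0 :: α <+: β') :
    ∃ β ∈ Ts i, β' = r0 :: β ∧ α <+: β := by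
  rcases mem_combTree.1 hβ' with rfl | ⟨i'', hi'', β, hβ, rfl⟩
  · exfalso
    have hlen := hpre.length_le
    rw [List.length_cons, List.length_cons, List.length_nil] at hlen
    have := (hTs i hi).len_pos hα
    omega
  · obtain ⟨-, hαβ⟩ := List.cons_prefix_cons.1 hpre
    rcases eq_or_ne i'' i with rfl | hne
    · exact ⟨β, hβ, rfl, hαβ⟩
    exfalso
    have h1 : β.take 1 = rootOf (Ts i'') := (rootOf_spec (hTs i'' hi'')).2.2 β hβ
    have hα1 : α.take 1 = rootOf (Ts i) := (rootOf_spec (hTs i hi)).2.2 α hα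
    have hβ1 : β.take 1 = α.take 1 := by
      have hp := (hTs i hi).len_pos hα
      rw [← prefix_take_eq hαβ, List.take_take,
        min_eq_left (by omega : 1 ≤ α.length)]
    have hroots : rootOf (Ts i) ∈ Ts i'' := by
      rw [← hα1, ← hβ1, h1]
      exact (rootOf_spec (hTs i'' hi'')).1
    exact comb_tree_disjoint hTs hord i i'' hi hi'' (Ne.symm hne) _
      (rootOf_spec (hTs i hi)).1 hroots

include hk hTs hord in
lemma comb_terminal_iff {i : ℕ} (hi : i < k) {α : GNode} (hα : α ∈ Ts i) :
    IsTerminalIn (combTree r0 k Ts) (r0 :: α) ↔ IsTerminalIn (Ts i) α := by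
  constructor
  · intro ht β hβ hpre
    have h1 : r0 :: β ∈ combTree r0 k Ts :=
      mem_combTree.2 (Or.inr ⟨i, hi, β, hβ, rfl⟩)
    have h2 : r0 :: α <+: r0 :: β := List.cons_prefix_cons.2 ⟨rfl, hpre⟩
    have := ht (r0 :: β) h1 h2
    exact List.cons_injective.eq_iff.1 this |>.symm ▸ rfl
  · intro ht β' hβ' hpre
    obtain ⟨β, hβ, rfl, hαβ⟩ := comb_cons_prefix_cases hk hTs hord hi hα hβ' hpre
    rw [ht β hβ hαβ]

include hk hTs hord in
lemma comb_children_root :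
    childrenIn (combTree r0 k Ts) [r0]
      = (Finset.range k).image (fun i => r0 :: rootOf (Ts i)) := by
  ext β
  rw [mem_childrenIn, Finset.mem_image]
  constructor
  · rintro ⟨hβ, hlen, hpre⟩
    rcases mem_combTree.1 hβ with rfl | ⟨i, hi, α, hα, rfl⟩
    · exfalso
      rw [List.length_cons, List.length_nil] at hlen
      omega
    · refine ⟨i, Finset.mem_range.2 hi, ?_⟩
      have hlen1 : α.length = 1 := by
        rw [List.length_cons, List.length_cons, List.length_nil] at hlen
        omega
      have : α.take 1 = α := by rw [← hlen1, List.take_length]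
      rw [← this, (rootOf_spec (hTs i hi)).2.2 α hα]
  · rintro ⟨i, hi, rfl⟩
    rw [Finset.mem_range] at hi
    have hroot := rootOf_spec (hTs i hi)
    refine ⟨mem_combTree.2 (Or.inr ⟨i, hi, _, hroot.1, rfl⟩), ?_, ?_⟩
    · rw [List.length_cons, List.length_cons, List.length_nil, hroot.2.1]
    · exact List.cons_prefix_cons.2 ⟨rfl, List.nil_prefix⟩

include hk hTs hord in
lemma comb_children_cons {i : ℕ} (hi : i < k) {α : GNode} (hα : α ∈ Ts i) :
    childrenIn (combTree r0 k Ts) (r0 :: α)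
      = (childrenIn (Ts i) α).image (fun c => r0 :: c) := by
  ext β'
  rw [mem_childrenIn, Finset.mem_image]
  constructor
  · rintro ⟨hβ', hlen, hpre⟩
    obtain ⟨β, hβ, rfl, hαβ⟩ := comb_cons_prefix_cases hk hTs hord hi hα hβ' hpre
    refine ⟨β, mem_childrenIn.2 ⟨hβ, ?_, hαβ⟩, rfl⟩
    rw [List.length_cons, List.length_cons] at hlen
    omega
  · rintro ⟨β, hβ, rfl⟩
    obtain ⟨hβT, hlen, hpre⟩ := mem_childrenIn.1 hβ
    exact ⟨mem_combTree.2 (Or.inr ⟨i, hi, β, hβT, rfl⟩),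
      by rw [List.length_cons, List.length_cons, hlen],
      List.cons_prefix_cons.2 ⟨rfl, hpre⟩⟩

include hk hTs hord in
lemma comb_root_not_terminal : ¬ IsTerminalIn (combTree r0 k Ts) [r0] := by
  intro ht
  have hroot := rootOf_spec (hTs 0 hk)
  have h1 : r0 :: rootOf (Ts 0) ∈ combTree r0 k Ts :=
    mem_combTree.2 (Or.inr ⟨0, hk, _, hroot.1, rfl⟩)
  have := ht _ h1 (List.cons_prefix_cons.2 ⟨rfl, List.nil_prefix⟩)
  have hlen := congrArg List.length this
  rw [List.length_cons, List.length_cons, List.length_nil, hroot.2.1] at hlen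
  omega

lemma mEnt_root_single (r0 : ℕ × Finset ℕ × ℤ) : mEnt [r0] = r0.1 := by
  show mEnt ([] ++ [r0]) = r0.1
  rw [mEnt_concat]

lemma iEnt_root_single (r0 : ℕ × Finset ℕ × ℤ) : iEnt [r0] = r0.2.1 := by
  show iEnt ([] ++ [r0]) = r0.2.1
  rw [iEnt_concat]

variable (j : ℕ)
variable (hr0m : r0.1 = m j) (hr0s : r0.2.2 = 1)
variable (hr0I : r0.2.1 = (Finset.range k).sup (fun i => iEnt (rootOf (Ts i))))
variable (hsch : ((Finset.range k).image fun i => minF (iEnt (rootOf (Ts i)))) ∈ Schreier (n j))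

include hk hTs hord hr0m hr0s hr0I hsch in
lemma comb_appropriate : IsAppropriate m n (combTree r0 k Ts) := by
  have hTne : ∀ (i : ℕ) (hi : i < k) (α : GNode), α ∈ Ts i → α ≠ [] :=
    fun i hi α hα => (hTs i hi).ne_nil α hα
  refine ⟨⟨[r0], Finset.mem_insert_self _ _⟩, ?_, ?_, ?_, ?_, ?_, ?_⟩
  · intro β hβ
    rcases mem_combTree.1 hβ with rfl | ⟨i, hi, α, hα, rfl⟩ <;> simp
  · intro β hβ k' hk' hk'2
    rcases mem_combTree.1 hβ with rfl | ⟨i, hi, α, hα, rfl⟩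
    · have : k' = 1 := by
        rw [List.length_cons, List.length_nil] at hk'2
        omega
      rw [this]
      exact Finset.mem_insert_self _ _
    · rcases Nat.exists_eq_add_of_lt hk' with ⟨k'', rfl⟩
      rw [zero_add]
      rcases Nat.eq_zero_or_pos k'' with rfl | hk''
      · show List.take 1 (r0 :: α) ∈ _
        rw [List.take_succ_cons, List.take_zero]
        exact Finset.mem_insert_self _ _
      · rw [List.take_succ_cons]
        rw [List.length_cons] at hk'2
        exact mem_combTree.2 (Or.inr ⟨i, hi, α.take k'',
          (hTs i hi).take_mem α hα k'' hk'' (by omega), rfl⟩)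
  · intro β hβ γ hγ h1 h2
    have hcase : ∀ δ ∈ combTree r0 k Ts, δ.length = 1 → δ = [r0] := by
      intro δ hδ hδ1
      rcases mem_combTree.1 hδ with rfl | ⟨i, hi, α, hα, rfl⟩
      · rfl
      · exfalso
        rw [List.length_cons] at hδ1
        have := (hTs i hi).len_pos hα
        omega
    rw [hcase β hβ h1, hcase γ hγ h2]
  · intro β hβ t ht
    rcases mem_combTree.1 hβ with rfl | ⟨i, hi, α, hα, rfl⟩
    · rw [List.mem_singleton.1 ht]
      refine ⟨Or.inl hr0s, ?_⟩
      rw [hr0I]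
      obtain ⟨q, hq⟩ := iEnt_nonempty (hTs 0 hk) (rootOf_spec (hTs 0 hk)).1
      exact ⟨q, Finset.mem_sup.2 ⟨0, Finset.mem_range.2 hk, hq⟩⟩
    · rcases List.mem_cons.1 ht with rfl | ht'
      · refine ⟨Or.inl hr0s, ?_⟩
        rw [hr0I]
        obtain ⟨q, hq⟩ := iEnt_nonempty (hTs 0 hk) (rootOf_spec (hTs 0 hk)).1
        exact ⟨q, Finset.mem_sup.2 ⟨0, Finset.mem_range.2 hk, hq⟩⟩
      · exact (hTs i hi).entries α hα t ht'
  · intro β hβ hterm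
    rcases mem_combTree.1 hβ with rfl | ⟨i, hi, α, hα, rfl⟩
    · exact absurd hterm (comb_root_not_terminal hk hTs hord)
    · have hterm' : IsTerminalIn (Ts i) α :=
        (comb_terminal_iff hk hTs hord hi hα).1 hterm
      obtain ⟨h0, p, hp⟩ := (hTs i hi).terminal_spec α hα hterm'
      exact ⟨by rw [cons_mEnt (hTne i hi α hα), h0], p, by rw [cons_iEnt (hTne i hi α hα), hp]⟩
  · intro β hβ hnt
    rcases mem_combTree.1 hβ with rfl | ⟨i, hi, α, hα, rfl⟩
    · refine ⟨j, by rw [mEnt_root_single, hr0m], ?_, ?_⟩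
      · rw [comb_children_root hk hTs hord, Finset.image_image]
        have himg : ∀ i' ∈ Finset.range k,
            (iEnt ∘ fun i => r0 :: rootOf (Ts i)) i' = iEnt (rootOf (Ts i')) := by
          intro i' hi'
          rw [Finset.mem_range] at hi'
          exact cons_iEnt (hTne i' hi' _ (rootOf_spec (hTs i' hi')).1) r0
        rw [Finset.image_congr himg]
        refine ⟨?_, ?_, ?_⟩
        · rintro I hI
          obtain ⟨i', hi', rfl⟩ := Finset.mem_image.1 hI
          rw [Finset.mem_range] at hi'
          exact iEnt_nonempty (hTs i' hi') (rootOf_spec (hTs i' hi')).1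
        · rintro I hI J hJ hne
          obtain ⟨i', hi', rfl⟩ := Finset.mem_image.1 hI
          obtain ⟨i'', hi'', rfl⟩ := Finset.mem_image.1 hJ
          rw [Finset.mem_range] at hi' hi''
          have hii : i' ≠ i'' := fun h => hne (by rw [h])
          rcases lt_or_gt_of_ne hii with h | h
          · exact Or.inl (hord i' i'' h hi'')
          · exact Or.inr (hord i'' i' h hi')
        · rw [Finset.image_image]
          exact hsch
      · rw [comb_children_root hk hTs hord, Finset.sup_image, iEnt_root_single, hr0I]
        refine Finset.sup_congr rfl (fun i' hi' => ?_)
        rw [Finset.mem_range] at hi'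
        exact (cons_iEnt (hTne i' hi' _ (rootOf_spec (hTs i' hi')).1) r0).symm
    · have hnt' : ¬ IsTerminalIn (Ts i) α :=
        fun h => hnt ((comb_terminal_iff hk hTs hord hi hα).2 h)
      obtain ⟨j', hm, hadm, hsup⟩ := (hTs i hi).nonterminal_spec α hα hnt'
      have hchld : ∀ c ∈ childrenIn (Ts i) α, c ∈ Ts i ∧ c ≠ [] := by
        intro c hc
        have := (mem_childrenIn.1 hc).1
        exact ⟨this, hTne i hi c this⟩
      refine ⟨j', by rw [cons_mEnt (hTne i hi α hα), hm], ?_, ?_⟩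
      · rw [comb_children_cons hk hTs hord hi hα, Finset.image_image]
        have himg : ∀ c ∈ childrenIn (Ts i) α,
            (iEnt ∘ fun c => r0 :: c) c = iEnt c := by
          intro c hc
          exact cons_iEnt (hchld c hc).2 r0
        rw [Finset.image_congr himg]
        exact hadm
      · rw [comb_children_cons hk hTs hord hi hα, Finset.sup_image,
          cons_iEnt (hTne i hi α hα), hsup]
        refine Finset.sup_congr rfl (fun c hc => ?_)
        exact (cons_iEnt (hchld c hc).2 r0).symm

include hk hTs hord in
lemma comb_filter_terminal :
    (combTree r0 k Ts).filter (fun β => IsTerminalIn (combTree r0 k Ts) β)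
      = (Finset.range k).biUnion
          (fun i => ((Ts i).filter (fun α => IsTerminalIn (Ts i) α)).image
            (fun α => r0 :: α)) := by
  ext β
  rw [Finset.mem_filter, Finset.mem_biUnion]
  constructor
  · rintro ⟨hβ, hterm⟩
    rcases mem_combTree.1 hβ with rfl | ⟨i, hi, α, hα, rfl⟩
    · exact absurd hterm (comb_root_not_terminal hk hTs hord)
    · exact ⟨i, Finset.mem_range.2 hi, Finset.mem_image_of_mem _
        (Finset.mem_filter.2 ⟨hα, (comb_terminal_iff hk hTs hord hi hα).1 hterm⟩)⟩
  · rintro ⟨i, hi, hβ⟩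
    rw [Finset.mem_range] at hi
    obtain ⟨α, hα, rfl⟩ := Finset.mem_image.1 hβ
    rw [Finset.mem_filter] at hα
    exact ⟨mem_combTree.2 (Or.inr ⟨i, hi, α, hα.1, rfl⟩),
      (comb_terminal_iff hk hTs hord hi hα.1).2 hα.2⟩

include hk hTs hord in
lemma mpair_comb (hr0s' : r0.2.2 = 1) (x : ℕ →₀ ℝ) :
    mpair (treeMeasure (combTree r0 k Ts)) x
      = (r0.1 : ℝ)⁻¹ * ∑ i ∈ Finset.range k, mpair (treeMeasure (Ts i)) x := by
  rw [mpair_treeMeasure, comb_filter_terminal hk hTs hord]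
  have hdisj : (↑(Finset.range k) : Set ℕ).PairwiseDisjoint
      (fun i => ((Ts i).filter (fun α => IsTerminalIn (Ts i) α)).image
        (fun α => r0 :: α)) := by
    intro i hi i' hi' hne
    simp only [Finset.mem_coe, Finset.mem_range] at hi hi'
    refine Finset.disjoint_left.2 (fun β hβ hβ' => ?_)
    obtain ⟨α, hα, rfl⟩ := Finset.mem_image.1 hβ
    obtain ⟨α', hα', heq⟩ := Finset.mem_image.1 hβ'
    have : α' = α := List.cons_injective.eq_iff.1 heq
    subst this
    exact comb_tree_disjoint hTs hord i i' hi hi' hne α'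
      (Finset.mem_filter.1 hα).1 (Finset.mem_filter.1 hα').1
  rw [Finset.sum_biUnion hdisj, Finset.mul_sum]
  refine Finset.sum_congr rfl (fun i hi => ?_)
  rw [Finset.mem_range] at hi
  rw [Finset.sum_image (fun α _ β _ h => List.cons_injective.eq_iff.1 h)]
  rw [mpair_treeMeasure, Finset.mul_sum]
  refine Finset.sum_congr rfl (fun α hα => ?_)
  rw [Finset.mem_filter] at hα
  have hne := (hTs i hi).ne_nil α hα.1
  rw [cons_mWeight hne, cons_epsProd hne, cons_sEnt hne, cons_pOf hne, hr0s']
  push_cast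
  rw [mul_inv]
  ring

end Comb

variable {m n l' : ℕ → ℕ}

/-! ### block sequences -/

lemma block_supp_nonempty {u : ℕ → ℕ →₀ ℝ} (hu : IsBlockSeq u) (i : ℕ) :
    (u i).support.Nonempty :=
  Finsupp.support_nonempty_iff.2 (hu.1 i)

lemma block_FinLt {u : ℕ → ℕ →₀ ℝ} (hu : IsBlockSeq u) :
    ∀ i i', i < i' → FinLt (u i).support (u i').support := by
  intro i i' h
  induction i' with
  | zero => omega
  | succ i' ih =>
    rcases Nat.lt_succ_iff_lt_or_eq.1 h with h' | h'
    · intro q hq r hr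
      obtain ⟨s, hs⟩ := block_supp_nonempty hu i'
      exact lt_trans (ih h' q hq s hs) (hu.2 i' s hs r hr)
    · subst h'
      exact fun q hq r hr => hu.2 i q hq r hr

lemma minSupp_strictMono {u : ℕ → ℕ →₀ ℝ} (hu : IsBlockSeq u) {i i' : ℕ} (h : i < i') :
    minSupp (u i) < minSupp (u i') :=
  block_FinLt hu i i' h _ (minF_mem (block_supp_nonempty hu i)) _
    (minF_mem (block_supp_nonempty hu i'))

lemma minSupp_ge {u : ℕ → ℕ →₀ ℝ} (hu : IsBlockSeq u) (i : ℕ) : i ≤ minSupp (u i) := by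
  induction i with
  | zero => exact Nat.zero_le _
  | succ i ih =>
    have h := minSupp_strictMono hu (Nat.lt_succ_self i)
    exact Nat.succ_le_of_lt (lt_of_le_of_lt ih h)

/-! ### Part 1 -/

lemma statement16_part1 (hml : MLParams m l') (j : ℕ) (k : ℕ) (x : ℕ → ℕ →₀ ℝ)
    (hadm : Admissible (n j) k (fun i => (x i).support)) :
    (1 / (m j : ℝ)) * ∑ i ∈ Finset.range k, mNorm m n (x i) ≤
      mNorm m n (∑ i ∈ Finset.range k, x i) := by
  have hmj : (0:ℝ) < (m j : ℝ) := by
    have := m_ge_seven hml j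
    exact_mod_cast (by omega : 0 < m j)
  rcases Nat.eq_zero_or_pos k with rfl | hk
  · simp only [Finset.range_zero, Finset.sum_empty, mul_zero]
    exact mNorm_nonneg hml 0
  obtain ⟨hne, hordx, hschx⟩ := hadm
  -- notation
  set y := ∑ i ∈ Finset.range k, x i with hy
  set E : ℕ → Finset ℕ := fun i =>
    if h : ((x i).support).Nonempty
    then Finset.Icc (minF ((x i).support)) (((x i).support).max' h) else ∅ with hE
  have hEdef : ∀ (i : ℕ) (hi : i < k), E i
      = Finset.Icc (minF ((x i).support)) (((x i).support).max' (hne i hi)) := by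
    intro i hi
    rw [hE]
    simp only [dif_pos (hne i hi)]
  have hsuppE : ∀ i, i < k → ∀ p ∈ (x i).support, p ∈ E i := by
    intro i hi p hp
    rw [hEdef i hi, Finset.mem_Icc]
    exact ⟨minF_le hp, Finset.le_max' _ p hp⟩
  have hEsep : ∀ i i', i < k → i' < k → i ≠ i' → ∀ p ∈ (x i).support, p ∉ E i' := by
    intro i i' hi hi' hne' p hp hpE
    rw [hEdef i' hi', Finset.mem_Icc] at hpE
    rcases lt_or_gt_of_ne hne' with h | h
    · -- i < i' : p < minF (supp x i')
      have h1 : p < minF ((x i').support) :=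
        hordx i i' h hi' p hp _ (minF_mem (hne i' hi'))
      omega
    · -- i' < i : p > max'
      have h1 : ((x i').support).max' (hne i' hi') < p :=
        hordx i' i h hi _ (Finset.max'_mem _ _) p hp
      omega
  refine le_of_forall_pos_le_add (fun ε hε => ?_)
  set δ : ℝ := ε * (m j : ℝ) / k with hδ
  have hδpos : 0 < δ := by
    rw [hδ]
    have : (0:ℝ) < (k:ℝ) := by exact_mod_cast hk
    positivity
  -- choose near-optimal trees
  have Hch : ∀ i : ℕ, ∃ T : Finset GNode, IsAppropriate m n T ∧
      (i < k → mNorm m n (x i) - min δ (mNorm m n (x i) / 2)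
        < mpair (treeMeasure T) (x i)) := by
    intro i
    by_cases hi : i < k
    · have hpos : 0 < mNorm m n (x i) := mNorm_pos hml (hne i hi)
      have hmin : 0 < min δ (mNorm m n (x i) / 2) := lt_min hδpos (by linarith)
      obtain ⟨T, hT, hT2⟩ := exists_mpair_gt (n := n) hml (x i) hmin
      exact ⟨T, hT, fun _ => hT2⟩
    · exact ⟨{[((0 : ℕ), ({0} : Finset ℕ), 1)]}, singleton_tree_appropriate 0 1 (Or.inl rfl),
        fun h => absurd h hi⟩
  choose T₀ hT₀ hT₀2 using Hch
  -- the chosen trees survive restriction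
  have hgt0 : ∀ i, i < k → 0 < mpair (treeMeasure (T₀ i)) (x i) := by
    intro i hi
    have h1 := hT₀2 i hi
    have hpos : 0 < mNorm m n (x i) := mNorm_pos hml (hne i hi)
    have : min δ (mNorm m n (x i) / 2) ≤ mNorm m n (x i) / 2 := min_le_right _ _
    linarith
  have hsurv : ∀ i, i < k → ∃ α ∈ T₀ i, (iEnt α ∩ E i).Nonempty := by
    intro i hi
    have hne0 : mpair (treeMeasure (T₀ i)) (x i) ≠ 0 := ne_of_gt (hgt0 i hi)
    rw [mpair_treeMeasure] at hne0
    obtain ⟨α, hα, hval⟩ := Finset.exists_ne_zero_of_sum_ne_zero hne0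
    rw [Finset.mem_filter] at hα
    have hxp : x i (pOf α) ≠ 0 := by
      intro hc
      rw [hc, mul_zero] at hval
      exact hval rfl
    have hpE : pOf α ∈ E i := hsuppE i hi _ (Finsupp.mem_support_iff.2 hxp)
    exact ⟨α, hα.1, ⟨pOf α, Finset.mem_inter.2 ⟨pOf_mem_iEnt (hT₀ i) hα.1 hα.2, hpE⟩⟩⟩
  set Ts : ℕ → Finset GNode := fun i => restrictTree (E i) (T₀ i) with hTs_def
  have hTs : ∀ i, i < k → IsAppropriate m n (Ts i) := by
    intro i hi
    exact restrictTree_appropriate hml (hT₀ i) (hsurv i hi)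
  have hrootmem : ∀ i, i < k → rootOf (Ts i) ∈ Ts i := fun i hi => (rootOf_spec (hTs i hi)).1
  have hrootsubE : ∀ i, i < k → iEnt (rootOf (Ts i)) ⊆ E i := by
    intro i hi
    exact res_iEnt_subset_E (hT₀ i) (hrootmem i hi)
  have hrootne : ∀ i, i < k → (iEnt (rootOf (Ts i))).Nonempty :=
    fun i hi => iEnt_nonempty (hTs i hi) (hrootmem i hi)
  have hElt : ∀ i i', i < i' → i' < k → ∀ p ∈ E i, ∀ q ∈ E i', p < q := by
    intro i i' h hi' p hp q hq
    have hi : i < k := lt_trans h hi'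
    rw [hEdef i hi, Finset.mem_Icc] at hp
    rw [hEdef i' hi', Finset.mem_Icc] at hq
    have h1 : ((x i).support).max' (hne i hi) < minF ((x i').support) :=
      hordx i i' h hi' _ (Finset.max'_mem _ _) _ (minF_mem (hne i' hi'))
    omega
  have hord : ∀ i i', i < i' → i' < k →
      FinLt (iEnt (rootOf (Ts i))) (iEnt (rootOf (Ts i'))) := by
    intro i i' h hi' p hp q hq
    exact hElt i i' h hi' p (hrootsubE i (lt_trans h hi') hp) q (hrootsubE i' hi' hq)
  -- Schreier condition for the roots
  have hroot_ge : ∀ i, i < k → minF ((x i).support) ≤ minF (iEnt (rootOf (Ts i)))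
      ∧ minF (iEnt (rootOf (Ts i))) ∈ E i := by
    intro i hi
    have hmem : minF (iEnt (rootOf (Ts i))) ∈ E i :=
      hrootsubE i hi (minF_mem (hrootne i hi))
    constructor
    · rw [hEdef i hi, Finset.mem_Icc] at hmem
      exact hmem.1
    · exact hmem
  have hsch : ((Finset.range k).image fun i => minF (iEnt (rootOf (Ts i))))
      ∈ Schreier (n j) := by
    set ψ : ℕ → ℕ := fun q =>
      if h : ∃ i, i < k ∧ minF (iEnt (rootOf (Ts i))) = q
      then minF ((x h.choose).support) else q with hψ
    have hψspec : ∀ q ∈ (Finset.range k).image fun i => minF (iEnt (rootOf (Ts i))),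
        ∃ i, i < k ∧ minF (iEnt (rootOf (Ts i))) = q ∧ ψ q = minF ((x i).support) := by
      intro q hq
      rw [Finset.mem_image] at hq
      obtain ⟨i, hi, rfl⟩ := hq
      rw [Finset.mem_range] at hi
      have h : ∃ i', i' < k ∧ minF (iEnt (rootOf (Ts i')))
          = minF (iEnt (rootOf (Ts i))) := ⟨i, hi, rfl⟩
      rw [hψ]
      simp only [dif_pos h]
      exact ⟨h.choose, h.choose_spec.1, h.choose_spec.2, rfl⟩
    refine schreier_embed _ _ _ ψ ?_ ?_ ?_ hschx
    · intro a ha b hb hab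
      obtain ⟨i, hi, hia, hψa⟩ := hψspec a ha
      obtain ⟨i', hi', hib, hψb⟩ := hψspec b hb
      rw [hψa, hψb]
      have haE : a ∈ E i := by rw [← hia]; exact (hroot_ge i hi).2
      have hbE : b ∈ E i' := by rw [← hib]; exact (hroot_ge i' hi').2
      have hii : i < i' := by
        rcases lt_trichotomy i i' with h | h | h
        · exact h
        · exfalso; rw [h, hib] at hia; omega
        · exfalso
          have := hElt i' i h hi b hbE a haE
          omega
      exact hordx i i' hii hi' _ (minF_mem (hne i hi)) _ (minF_mem (hne i' hi'))
    · intro a ha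
      obtain ⟨i, hi, _, hψa⟩ := hψspec a ha
      rw [hψa, Finset.mem_image]
      exact ⟨i, Finset.mem_range.2 hi, rfl⟩
    · intro a ha
      obtain ⟨i, hi, hia, hψa⟩ := hψspec a ha
      rw [hψa, ← hia]
      exact (hroot_ge i hi).1
  -- the combined tree
  set r0 : ℕ × Finset ℕ × ℤ :=
    (m j, (Finset.range k).sup (fun i => iEnt (rootOf (Ts i))), 1) with hr0
  have hTsk : ∀ i < k, IsAppropriate m n (Ts i) := hTs
  have hcomb : IsAppropriate m n (combTree r0 k Ts) :=
    comb_appropriate hk hTsk hord j rfl rfl rfl hsch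
  have hcomble := le_mNorm hml hcomb y
  have hcombval : mpair (treeMeasure (combTree r0 k Ts)) y
      = (m j : ℝ)⁻¹ * ∑ i ∈ Finset.range k, mpair (treeMeasure (Ts i)) y :=
    mpair_comb hk hTsk hord rfl y
  -- evaluate each restricted tree against y
  have hval : ∀ i, i < k →
      mpair (treeMeasure (Ts i)) y = mpair (treeMeasure (T₀ i)) (x i) := by
    intro i hi
    rw [hy, mpair_sum_right]
    rw [Finset.sum_eq_single_of_mem i (Finset.mem_range.2 hi)]
    · exact mpair_restrict_eq (hT₀ i) (hsuppE i hi)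
    · intro i' hi' hne'
      rw [Finset.mem_range] at hi'
      exact mpair_restrict_disjoint (hT₀ i) (hEsep i' i hi' hi hne')
  -- put everything together
  have hsum : ∑ i ∈ Finset.range k, (mNorm m n (x i) - δ)
      ≤ ∑ i ∈ Finset.range k, mpair (treeMeasure (Ts i)) y := by
    refine Finset.sum_le_sum (fun i hi => ?_)
    rw [Finset.mem_range] at hi
    rw [hval i hi]
    have h1 := hT₀2 i hi
    have h2 : min δ (mNorm m n (x i) / 2) ≤ δ := min_le_left _ _
    linarith
  have hfinal : (1 / (m j : ℝ)) * ∑ i ∈ Finset.range k, mNorm m n (x i) - ε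
      ≤ mpair (treeMeasure (combTree r0 k Ts)) y := by
    rw [hcombval]
    have hksum : ∑ i ∈ Finset.range k, (mNorm m n (x i) - δ)
        = (∑ i ∈ Finset.range k, mNorm m n (x i)) - k * δ := by
      rw [Finset.sum_sub_distrib, Finset.sum_const, Finset.card_range, nsmul_eq_mul]
    have hkδ : (k:ℝ) * δ = ε * (m j : ℝ) := by
      rw [hδ]
      field_simp
    have h3 : (m j : ℝ)⁻¹ * ((∑ i ∈ Finset.range k, mNorm m n (x i)) - k * δ)
        = (1 / (m j : ℝ)) * ∑ i ∈ Finset.range k, mNorm m n (x i) - ε := by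
      rw [mul_sub, hkδ, one_div]
      congr 1
      field_simp
    calc (1 / (m j : ℝ)) * ∑ i ∈ Finset.range k, mNorm m n (x i) - ε
        = (m j : ℝ)⁻¹ * ((∑ i ∈ Finset.range k, mNorm m n (x i)) - k * δ) := h3.symm
      _ = (m j : ℝ)⁻¹ * ∑ i ∈ Finset.range k, (mNorm m n (x i) - δ) := by rw [hksum]
      _ ≤ (m j : ℝ)⁻¹ * ∑ i ∈ Finset.range k, mpair (treeMeasure (Ts i)) y := by
          exact mul_le_mul_of_nonneg_left hsum (by positivity)
  linarith

/-! ### Part 2 -/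

lemma statement16_part2 (hml : MLParams m l') (j : ℕ) (u : ℕ → ℕ →₀ ℝ)
    (hu : IsBlockSeq u) (hnorm : ∀ k, mNorm m n (u k) = 1) (F : Finset ℕ)
    (hF : F ∈ Schreier (n j)) (a : ℕ → ℝ) :
    (1 / (m j : ℝ)) * ∑ i ∈ F, |a i| ≤ mNorm m n (∑ i ∈ F, a i • u i) := by
  have hmj : (0:ℝ) < (m j : ℝ) := by
    have := m_ge_seven hml j
    exact_mod_cast (by omega : 0 < m j)
  set F' := F.filter (fun i => a i ≠ 0) with hF'
  have hF'mem : ∀ i ∈ F', a i ≠ 0 := fun i hi => (Finset.mem_filter.1 hi).2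
  have hsum1 : ∑ i ∈ F, a i • u i = ∑ i ∈ F', a i • u i := by
    symm
    refine Finset.sum_filter_of_ne (fun i _ h => ?_)
    intro hc
    rw [hc, zero_smul] at h
    exact h rfl
  have hsum2 : ∑ i ∈ F, |a i| = ∑ i ∈ F', |a i| := by
    symm
    refine Finset.sum_filter_of_ne (fun i _ h => ?_)
    intro hc
    rw [hc, abs_zero] at h
    exact h rfl
  have hF's : F' ∈ Schreier (n j) := schreier_hereditary (Finset.filter_subset _ _) hF
  set t := F'.card with ht
  set e := F'.orderIsoOfFin rfl with he
  have he_mem : ∀ s : Fin t, (e s : ℕ) ∈ F' := fun s => (e s).2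
  set xx : ℕ → ℕ →₀ ℝ := fun s =>
    if h : s < t then a (e ⟨s, h⟩) • u (e ⟨s, h⟩) else 0 with hxx
  have hxxlt : ∀ (s : ℕ) (h : s < t), xx s = a (e ⟨s, h⟩) • u (e ⟨s, h⟩) := by
    intro s h
    rw [hxx]
    simp only [dif_pos h]
  have hxxsupp : ∀ (s : ℕ) (h : s < t), (xx s).support = (u (e ⟨s, h⟩)).support := by
    intro s h
    rw [hxxlt s h]
    exact Finsupp.support_smul_eq (hF'mem _ (he_mem ⟨s, h⟩))
  -- the sums agree
  have hsum3 : ∑ s ∈ Finset.range t, xx s = ∑ i ∈ F', a i • u i := by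
    rw [← Fin.sum_univ_eq_sum_range]
    have h1 : ∀ s : Fin t, xx s = a (e s) • u (e s) := by
      intro s
      rw [hxxlt s s.isLt]
    rw [Finset.sum_congr rfl (fun s _ => h1 s)]
    rw [← Finset.sum_coe_sort F' (fun i => a i • u i)]
    exact Equiv.sum_comp e.toEquiv (fun i => a (i : ℕ) • u (i : ℕ))
  -- admissibility
  have hadm : Admissible (n j) t (fun s => (xx s).support) := by
    refine ⟨?_, ?_, ?_⟩
    · intro s hs
      show ((xx s).support).Nonempty
      rw [hxxsupp s hs]
      exact block_supp_nonempty hu _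
    · intro s s' hss hs'
      have hs : s < t := lt_trans hss hs'
      show FinLt ((xx s).support) ((xx s').support)
      rw [hxxsupp s hs, hxxsupp s' hs']
      refine block_FinLt hu _ _ ?_
      exact e.strictMono (by exact_mod_cast hss)
    · have himg : ((Finset.range t).image fun s => minF ((xx s).support))
          = F'.image (fun i => minSupp (u i)) := by
        ext q
        rw [Finset.mem_image, Finset.mem_image]
        constructor
        · rintro ⟨s, hs, rfl⟩
          rw [Finset.mem_range] at hs
          exact ⟨e ⟨s, hs⟩, he_mem _, by rw [hxxsupp s hs]; rfl⟩
        · rintro ⟨i, hi, rfl⟩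
          refine ⟨(e.symm ⟨i, hi⟩ : Fin t), Finset.mem_range.2 (e.symm ⟨i, hi⟩).isLt, ?_⟩
          rw [hxxsupp _ (e.symm ⟨i, hi⟩).isLt]
          have : e ⟨(e.symm ⟨i, hi⟩ : Fin t), (e.symm ⟨i, hi⟩).isLt⟩ = ⟨i, hi⟩ := by
            rw [show (⟨(e.symm ⟨i, hi⟩ : Fin t), (e.symm ⟨i, hi⟩).isLt⟩ : Fin t)
              = e.symm ⟨i, hi⟩ from rfl]
            exact e.apply_symm_apply _
          rw [this]
          rfl
      rw [himg]
      set ψ : ℕ → ℕ := fun q =>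
        if h : ∃ i ∈ F', minSupp (u i) = q then h.choose else q with hψ
      have hψspec : ∀ q ∈ F'.image (fun i => minSupp (u i)),
          ∃ i ∈ F', minSupp (u i) = q ∧ ψ q = i := by
        intro q hq
        rw [Finset.mem_image] at hq
        obtain ⟨i, hi, rfl⟩ := hq
        have h : ∃ i' ∈ F', minSupp (u i') = minSupp (u i) := ⟨i, hi, rfl⟩
        rw [hψ]
        simp only [dif_pos h]
        exact ⟨h.choose, h.choose_spec.1, h.choose_spec.2, rfl⟩
      refine schreier_embed _ F' _ ψ ?_ ?_ ?_ hF's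
      · intro q hq r hr hqr
        obtain ⟨i, hi, hiq, hψq⟩ := hψspec q hq
        obtain ⟨i', hi', hir, hψr⟩ := hψspec r hr
        rw [hψq, hψr]
        rcases lt_trichotomy i i' with h | h | h
        · exact h
        · exfalso; rw [h, hir] at hiq; omega
        · exfalso
          have := minSupp_strictMono hu h
          omega
      · intro q hq
        obtain ⟨i, hi, _, hψq⟩ := hψspec q hq
        rw [hψq]
        exact hi
      · intro q hq
        obtain ⟨i, hi, hiq, hψq⟩ := hψspec q hq
        rw [hψq, ← hiq]
        exact minSupp_ge hu i
  have hpart1 := statement16_part1 hml j t xx hadm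
  rw [hsum3] at hpart1
  have hlow : ∑ i ∈ F', |a i| ≤ ∑ s ∈ Finset.range t, mNorm m n (xx s) := by
    rw [← Fin.sum_univ_eq_sum_range, ← Finset.sum_coe_sort F' (fun i => |a i|),
      ← Equiv.sum_comp e.toEquiv (fun i => |a (i : ℕ)|)]
    refine Finset.sum_le_sum (fun s _ => ?_)
    have h1 := mNorm_smul_ge (n := n) hml (a (e s)) (u (e s))
    rw [hnorm (e s), mul_one] at h1
    calc |a (e.toEquiv s)| ≤ mNorm m n (a (e s) • u (e s)) := h1
      _ = mNorm m n (xx s) := by rw [hxxlt s s.isLt]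
  calc (1 / (m j : ℝ)) * ∑ i ∈ F, |a i|
      = (1 / (m j : ℝ)) * ∑ i ∈ F', |a i| := by rw [hsum2]
    _ ≤ (1 / (m j : ℝ)) * ∑ s ∈ Finset.range t, mNorm m n (xx s) := by
        refine mul_le_mul_of_nonneg_left hlow (by positivity)
    _ ≤ mNorm m n (∑ i ∈ F', a i • u i) := hpart1
    _ = mNorm m n (∑ i ∈ F, a i • u i) := by rw [hsum1]


/-! ## STATEMENT 16 -/


theorem statement16 (m n l : ℕ → ℕ) (hml : MLParams m l) (hn : MGoodSeq m l n) (j : ℕ) :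
    (∀ (k : ℕ) (x : ℕ → ℕ →₀ ℝ), Admissible (n j) k (fun i => (x i).support) →
      (1 / (m j : ℝ)) * ∑ i ∈ Finset.range k, mNorm m n (x i) ≤
        mNorm m n (∑ i ∈ Finset.range k, x i)) ∧
    (∀ u : ℕ → ℕ →₀ ℝ, IsBlockSeq u → (∀ k, mNorm m n (u k) = 1) →
      ∀ F ∈ Schreier (n j), ∀ a : ℕ → ℝ,
        (1 / (m j : ℝ)) * ∑ i ∈ F, |a i| ≤ mNorm m n (∑ i ∈ F, a i • u i)) :=
  ⟨fun k x hadm => statement16_part1 hml j k x hadm,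
   fun u hu hnorm F hF a => statement16_part2 hml j u hu hnorm F hF a⟩

end Gasparis
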